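/- arXiv:1703.05309 — 3 statements merged into one kernel-verified Lean document; each statement's English description precedes it below -/
import Mathlib

section
/- Let m and n be positive integers with n ≤ m, and let U be an m × m unitary matrix over ℂ. Then ∫_{ℂ^m} exp(−2 ∑_{j=1}^m |α_j|²) · ∏_{j=1}^n (4·|∑_{k=1}^m α_k U_{k,j}|² − 1) · ∏_{j=1}^n (|α_j|² − 1/2) d²α = ∫_{ℂ^m} exp(−2 ∑_{j=1}^m |α_j|²) · ∏_{j=1}^n (4·|∑_{k=1}^n α_k U_{k,j}|² − 1) · ∏_{j=1}^n (|α_j|² − 1/2) d²α; that is, in the inner sums the range of k may be truncated from m to n without changing the value of the integral. -/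
open MeasureTheory

open Finset Set

noncomputable section

namespace TruncAux

def Efac (z : ℂ) : ℂ := Complex.exp (-2 * ((‖z‖ ^ 2 : ℝ) : ℂ))

def mono (p q : ℕ) (z : ℂ) : ℂ := Efac z * z ^ p * ((starRingEnd ℂ) z) ^ q

def Imono (p q : ℕ) : ℂ := ∫ z : ℂ, mono p q z

lemma continuous_mono (p q : ℕ) : Continuous (mono p q) := by
  unfold mono Efac
  have h1 : Continuous fun z : ℂ => ((‖z‖ ^ 2 : ℝ) : ℂ) :=
    Complex.continuous_ofReal.comp ((continuous_norm.pow 2))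
  exact (((Complex.continuous_exp.comp ((continuous_const.mul h1))).mul
    (continuous_pow p)).mul ((Complex.continuous_conj).pow q))

lemma norm_mono (p q : ℕ) (z : ℂ) :
    ‖mono p q z‖ = Real.exp (-2 * ‖z‖ ^ 2) * ‖z‖ ^ (p + q) := by
  unfold mono Efac
  rw [norm_mul, norm_mul,
    Complex.norm_exp]
  have : (-2 * ((‖z‖ ^ 2 : ℝ) : ℂ)).re = -2 * ‖z‖ ^ 2 := by
    simp [← Complex.ofReal_pow]
  rw [this]
  simp [norm_pow, pow_add, mul_assoc]

lemma pow_le_exp_factorial (x : ℝ) (k : ℕ) (hx : 0 ≤ x) : x ^ k ≤ k.factorial * Real.exp x := by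
  have h := Real.sum_le_exp_of_nonneg hx (k + 1)
  have h2 : x ^ k / k.factorial ≤ Real.exp x := by
    refine le_trans ?_ h
    exact Finset.single_le_sum (f := fun i => x ^ i / i.factorial)
      (fun i _ => by positivity) (Finset.self_mem_range_succ k)
  have hk : (0:ℝ) < k.factorial := by positivity
  rw [div_le_iff₀ hk] at h2
  linarith [h2]

lemma key_bound (t : ℝ) (k : ℕ) (ht : 0 ≤ t) :
    Real.exp (-2 * t ^ 2) * t ^ k ≤ (1 + k.factorial) * Real.exp (-(t ^ 2)) := by
  have h1 : t ^ k ≤ 1 + (t ^ 2) ^ k := by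
    rcases le_total t 1 with h | h
    · have h0 : t ^ k ≤ 1 := pow_le_one₀ ht h
      nlinarith [pow_nonneg (pow_nonneg ht 2) k]
    · have h2 : t ^ k ≤ (t ^ 2) ^ k := by
        rw [← pow_mul]
        exact pow_le_pow_right₀ h (by omega)
      linarith
  have h2 : (t ^ 2) ^ k ≤ k.factorial * Real.exp (t ^ 2) :=
    pow_le_exp_factorial _ _ (by positivity)
  have h3 : t ^ k ≤ (1 + k.factorial) * Real.exp (t ^ 2) := by
    have he : (1:ℝ) ≤ Real.exp (t ^ 2) := Real.one_le_exp (by positivity)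
    calc t ^ k ≤ 1 + (t ^ 2) ^ k := h1
    _ ≤ 1 + k.factorial * Real.exp (t ^ 2) := by linarith
    _ ≤ (1 + k.factorial) * Real.exp (t ^ 2) := by
        have : (0:ℝ) ≤ k.factorial := by positivity
        nlinarith
  calc Real.exp (-2 * t ^ 2) * t ^ k
      ≤ Real.exp (-2 * t ^ 2) * ((1 + k.factorial) * Real.exp (t ^ 2)) := by
        exact mul_le_mul_of_nonneg_left h3 (Real.exp_pos _).le
    _ = (1 + k.factorial) * Real.exp (-(t ^ 2)) := by
        rw [mul_comm, mul_assoc, ← Real.exp_add]; ring_nf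

lemma integrable_exp_neg_abs_sq : Integrable (fun z : ℂ => Real.exp (-(‖z‖ ^ 2))) := by
  have := ((MeasurePreserving.symm _ Complex.volume_preserving_equiv_real_prod).integrable_comp_emb
    Complex.measurableEquivRealProd.symm.measurableEmbedding
    (g := fun z : ℂ => Real.exp (-(‖z‖ ^ 2))))
  rw [← this]
  have : ((fun z : ℂ => Real.exp (-(‖z‖ ^ 2))) ∘ Complex.measurableEquivRealProd.symm)
      = fun p : ℝ × ℝ => Real.exp (-1 * p.1 ^ 2) * Real.exp (-1 * p.2 ^ 2) := by
    funext p
    simp only [Function.comp_apply, Complex.measurableEquivRealProd_symm_apply]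
    rw [← Real.exp_add]
    congr 1
    rw [Complex.sq_norm, Complex.normSq_mk]  -- ?
    ring
  rw [this, Measure.volume_eq_prod]
  exact (integrable_exp_neg_mul_sq one_pos).mul_prod (integrable_exp_neg_mul_sq one_pos)


lemma integrable_mono (p q : ℕ) : Integrable (mono p q) := by
  refine Integrable.mono'
    (g := fun z => ((1:ℝ) + (p + q).factorial) * Real.exp (-(‖z‖ ^ 2)))
    (integrable_exp_neg_abs_sq.const_mul _)
    ((continuous_mono p q).aestronglyMeasurable) ?_
  filter_upwards with z
  rw [norm_mono]
  exact key_bound _ _ (norm_nonneg z)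

open Real in
lemma radial_integrable (k : ℕ) :
    IntegrableOn (fun r : ℝ => r ^ k * Real.exp (-2 * r ^ 2)) (Ioi 0) := by
  have h := (integrable_rpow_mul_exp_neg_mul_sq (b := 2) two_pos
    (s := (k : ℝ)) (by exact_mod_cast neg_one_lt_zero.trans_le (Nat.cast_nonneg k))).integrableOn (s := Ioi 0)
  simpa [Real.rpow_natCast] using h

open Real Filter in
lemma tendsto_exp_neg_two_sq : Tendsto (fun y : ℝ => Real.exp (-2 * y ^ 2)) atTop (nhds 0) := by
  apply Real.tendsto_exp_atBot.comp
  have h1 : Tendsto (fun y : ℝ => y ^ 2) atTop atTop := tendsto_pow_atTop two_ne_zero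
  have := h1.const_mul_atTop_of_neg (by norm_num : (-2:ℝ) < 0)
  exact this

open Real Filter in
lemma tendsto_sq_exp_neg_two_sq : Tendsto (fun y : ℝ => y ^ 2 * Real.exp (-2 * y ^ 2)) atTop (nhds 0) := by
  have h := rpow_mul_exp_neg_mul_sq_isLittleO_exp_neg (b := 2) two_pos 2
  have h2 : Tendsto (fun x : ℝ => Real.exp (-(1/2) * x)) atTop (nhds 0) := by
    apply Real.tendsto_exp_atBot.comp
    exact (tendsto_id.const_mul_atTop_of_neg (by norm_num : (-(1/2):ℝ) < 0))
  have h3 := h.trans_tendsto h2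
  apply h3.congr'
  filter_upwards [eventually_ge_atTop (0:ℝ)] with x hx
  rw [show (2:ℝ) = ((2:ℕ):ℝ) by norm_num, Real.rpow_natCast]

open Real Filter in
lemma radial1 : ∫ r in Ioi (0:ℝ), r ^ 1 * Real.exp (-2 * r ^ 2) = 1/4 := by
  have hder : ∀ x ∈ Ioi (0:ℝ), HasDerivAt (fun r : ℝ => -(1/4) * Real.exp (-2 * r ^ 2))
      (x ^ 1 * Real.exp (-2 * x ^ 2)) x := by
    intro x _
    have h1 : HasDerivAt (fun r : ℝ => -2 * r ^ 2) (-2 * (2 * x ^ 1)) x :=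
      (hasDerivAt_pow 2 x).const_mul (-2)
    have h2 := (h1.exp).const_mul (-(1/4 : ℝ))
    exact h2.congr_deriv (by ring)
  have hcont : ContinuousWithinAt (fun r : ℝ => -(1/4) * Real.exp (-2 * r ^ 2)) (Ici 0) 0 := by
    apply Continuous.continuousWithinAt
    continuity
  have htend : Tendsto (fun r : ℝ => -(1/4) * Real.exp (-2 * r ^ 2)) atTop (nhds 0) := by
    have := tendsto_exp_neg_two_sq.const_mul (-(1/4 : ℝ))
    simpa using this
  have := integral_Ioi_of_hasDerivAt_of_tendsto hcont hder (radial_integrable 1) htend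
  rw [this]
  norm_num

open Real Filter in
lemma radial3 : ∫ r in Ioi (0:ℝ), r ^ 3 * Real.exp (-2 * r ^ 2) = 1/8 := by
  have hder : ∀ x ∈ Ioi (0:ℝ), HasDerivAt (fun r : ℝ => -(r ^ 2/4 + 1/8) * Real.exp (-2 * r ^ 2))
      (x ^ 3 * Real.exp (-2 * x ^ 2)) x := by
    intro x _
    have h1 : HasDerivAt (fun r : ℝ => -2 * r ^ 2) (-2 * (2 * x ^ 1)) x :=
      (hasDerivAt_pow 2 x).const_mul (-2)
    have h2 : HasDerivAt (fun r : ℝ => -(r ^ 2/4 + 1/8)) (-(2 * x ^ 1/4)) x := by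
      have := ((hasDerivAt_pow 2 x).div_const 4).add_const (1/8 : ℝ)
      exact this.neg
    have h3 := h2.mul (h1.exp)
    exact h3.congr_deriv (by ring)
  have hcont : ContinuousWithinAt (fun r : ℝ => -(r ^ 2/4 + 1/8) * Real.exp (-2 * r ^ 2)) (Ici 0) 0 := by
    apply Continuous.continuousWithinAt
    continuity
  have htend : Tendsto (fun r : ℝ => -(r ^ 2/4 + 1/8) * Real.exp (-2 * r ^ 2)) atTop (nhds 0) := by
    have h1 := tendsto_sq_exp_neg_two_sq.const_mul (-(1/4 : ℝ))
    have h2 := tendsto_exp_neg_two_sq.const_mul (-(1/8 : ℝ))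
    have h3 := h1.add h2
    have : (fun y : ℝ => -(1/4) * (y ^ 2 * Real.exp (-2 * y ^ 2)) + -(1/8) * Real.exp (-2 * y ^ 2))
        = fun r : ℝ => -(r ^ 2/4 + 1/8) * Real.exp (-2 * r ^ 2) := by
      funext y; ring
    rw [this] at h3
    simpa using h3
  have := integral_Ioi_of_hasDerivAt_of_tendsto hcont hder (radial_integrable 3) htend
  rw [this]
  norm_num

open Real Filter in
def Athe (d : ℝ) : ℂ := ∫ θ in Ioo (-Real.pi) Real.pi, Complex.exp ((d : ℂ) * θ * Complex.I)

lemma Athe_zero : Athe 0 = ((2 * Real.pi : ℝ) : ℂ) := by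
  unfold Athe
  simp only [Complex.ofReal_zero, zero_mul, Complex.exp_zero]
  rw [setIntegral_const]
  rw [Real.volume_real_Ioo]
  rw [max_eq_left (by linarith [Real.pi_pos])]
  push_cast
  simp [smul_eq_mul]
  ring

lemma Athe_int (d : ℤ) (hd : d ≠ 0) : Athe d = 0 := by
  unfold Athe
  have hc : ((d : ℝ) : ℂ) * Complex.I ≠ 0 := by
    simp [Complex.ext_iff, hd]
  have h1 : ∀ θ : ℝ, Complex.exp (((d:ℝ) : ℂ) * θ * Complex.I)
      = Complex.exp ((((d:ℝ):ℂ) * Complex.I) * θ) := by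
    intro θ; ring_nf
  simp_rw [h1]
  rw [← integral_Ioc_eq_integral_Ioo,
    ← intervalIntegral.integral_of_le (by linarith [Real.pi_pos] : -Real.pi ≤ Real.pi)]
  rw [integral_exp_mul_complex hc]
  have hpos : ((d:ℝ):ℂ) * Complex.I * (Real.pi : ℂ) = (d : ℂ) * ((Real.pi:ℂ) * Complex.I) := by
    push_cast; ring
  have hneg : ((d:ℝ):ℂ) * Complex.I * ((-Real.pi : ℝ) : ℂ) = (d : ℂ) * (-((Real.pi:ℂ) * Complex.I)) := by
    push_cast; ring
  rw [hpos, hneg]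
  rw [show ((d:ℂ) * ((Real.pi:ℂ) * Complex.I)) = ((d:ℤ):ℂ) * ((Real.pi:ℂ) * Complex.I) by push_cast; ring]
  rw [show ((d:ℂ) * (-((Real.pi:ℂ) * Complex.I))) = ((d:ℤ):ℂ) * (-((Real.pi:ℂ) * Complex.I)) by push_cast; ring]
  rw [Complex.exp_int_mul, Complex.exp_int_mul]
  rw [Complex.exp_pi_mul_I, Complex.exp_neg, Complex.exp_pi_mul_I]
  norm_num

lemma Imono_eq (p q : ℕ) :
    Imono p q = ((∫ r in Ioi (0:ℝ), r ^ (p + q + 1) * Real.exp (-2 * r ^ 2) : ℝ) : ℂ)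
      * Athe ((p : ℝ) - (q : ℝ)) := by
  have g1 : ℝ → ℂ := fun r => ((r ^ (p + q + 1) * Real.exp (-2 * r ^ 2) : ℝ) : ℂ)
  rw [Imono, ← Complex.integral_comp_polarCoord_symm (mono p q)]
  rw [polarCoord_target]
  have key : ∀ x ∈ Ioi (0:ℝ) ×ˢ Ioo (-Real.pi) Real.pi,
      x.1 • mono p q (Complex.polarCoord.symm x)
      = (fun x : ℝ × ℝ => (fun r : ℝ => ((r ^ (p + q + 1) * Real.exp (-2 * r ^ 2) : ℝ) : ℂ)) x.1 *
        (fun θ : ℝ => Complex.exp ((((p : ℝ) - (q : ℝ)) : ℂ) * θ * Complex.I)) x.2) x := by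
    rintro ⟨r, θ⟩ hx
    have hr : (0:ℝ) < r := hx.1
    have hw : Complex.polarCoord.symm (r, θ) = (r : ℂ) * Complex.exp ((θ:ℝ) * Complex.I) := by
      rw [Complex.polarCoord_symm_apply]
      rw [Complex.exp_mul_I]
      push_cast [Complex.ofReal_cos, Complex.ofReal_sin]
      ring
    have habs2 : ‖((r:ℂ) * Complex.exp ((θ:ℝ) * Complex.I))‖ = r := by
      rw [norm_mul, Complex.norm_exp_ofReal_mul_I, Complex.norm_real, Real.norm_eq_abs, abs_of_pos hr, mul_one]
    have hconj2 : (starRingEnd ℂ) ((r:ℂ) * Complex.exp ((θ:ℝ) * Complex.I))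
        = (r : ℂ) * Complex.exp (-((θ:ℝ) * Complex.I)) := by
      rw [map_mul, Complex.conj_ofReal, ← Complex.exp_conj]
      congr 2
      simp [Complex.ext_iff]
    have hexp : (Complex.exp (-2 * ((r ^ 2 : ℝ) : ℂ))) = ((Real.exp (-2 * r ^ 2) : ℝ) : ℂ) := by
      rw [Complex.ofReal_exp]
      congr 1
      push_cast
      ring
    have hsplit : Complex.exp ((((p:ℝ) - (q:ℝ)) : ℂ) * θ * Complex.I)
        = Complex.exp ((θ:ℝ) * Complex.I) ^ p * Complex.exp (-((θ:ℝ) * Complex.I)) ^ q := by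
      rw [← Complex.exp_nat_mul, ← Complex.exp_nat_mul, ← Complex.exp_add]
      congr 1
      push_cast
      ring
    simp only [mono, Efac, hw, habs2, hconj2, hexp, hsplit, mul_pow, Complex.real_smul]
    push_cast
    ring
  rw [setIntegral_congr_fun (measurableSet_Ioi.prod measurableSet_Ioo) key]
  rw [Measure.volume_eq_prod, ← Measure.prod_restrict]
  rw [integral_prod_mul (fun r : ℝ => ((r ^ (p + q + 1) * Real.exp (-2 * r ^ 2) : ℝ) : ℂ))
    (fun θ : ℝ => Complex.exp ((((p : ℝ) - (q : ℝ)) : ℂ) * θ * Complex.I))]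
  congr 1
  · exact integral_ofReal
  · unfold Athe
    push_cast
    rfl

lemma Imono_ne (p q : ℕ) (h : p ≠ q) : Imono p q = 0 := by
  rw [Imono_eq]
  have : ((p : ℝ) - (q : ℝ)) = (((p:ℤ) - (q:ℤ) : ℤ) : ℝ) := by push_cast; ring
  rw [this, Athe_int _ (by omega), mul_zero]

lemma Imono_00 : Imono 0 0 = ((1/4 : ℝ) : ℂ) * Athe 0 := by
  rw [Imono_eq, show 0 + 0 + 1 = 1 from rfl, radial1,
    show ((0:ℕ):ℝ) - ((0:ℕ):ℝ) = 0 by norm_num]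

lemma Imono_11 : Imono 1 1 = ((1/8 : ℝ) : ℂ) * Athe 0 := by
  rw [Imono_eq, show 1 + 1 + 1 = 3 from rfl, radial3,
    show ((1:ℕ):ℝ) - ((1:ℕ):ℝ) = 0 by norm_num]

lemma Imono_11_eq_half : Imono 1 1 = (1/2 : ℂ) * Imono 0 0 := by
  rw [Imono_00, Imono_11]
  push_cast
  ring

variable {m : ℕ}

/-- per-coordinate integral value -/
def J (n : ℕ) (c : Fin m) (p q : ℕ) : ℂ :=
  if (c : ℕ) < n then Imono (p+1) (q+1) - (1/2 : ℂ) * Imono p q else Imono p q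

/-- per-coordinate integrand -/
def hfun (n : ℕ) (c : Fin m) (p q : ℕ) (z : ℂ) : ℂ :=
  mono p q z * (if (c : ℕ) < n then z * (starRingEnd ℂ) z - 1/2 else 1)

lemma hfun_eq (n : ℕ) (c : Fin m) (p q : ℕ) :
    hfun n c p q = fun z => if (c : ℕ) < n then mono (p+1) (q+1) z - (1/2 : ℂ) * mono p q z
      else mono p q z := by
  funext z
  unfold hfun mono
  by_cases h : (c : ℕ) < n <;> simp only [h, if_true, if_false] <;> ring

lemma hfun_integrable (n : ℕ) (c : Fin m) (p q : ℕ) : Integrable (hfun n c p q) := by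
  rw [hfun_eq]
  by_cases h : (c : ℕ) < n <;> simp only [h, if_true, if_false]
  · exact (integrable_mono (p+1) (q+1)).sub ((integrable_mono p q).const_mul _)
  · exact integrable_mono p q

lemma hfun_integral (n : ℕ) (c : Fin m) (p q : ℕ) :
    ∫ z : ℂ, hfun n c p q z = J n c p q := by
  rw [hfun_eq]
  unfold J
  by_cases h : (c : ℕ) < n <;> simp only [h, if_true, if_false]
  · rw [integral_sub (integrable_mono (p+1) (q+1)) ((integrable_mono p q).const_mul _),
      MeasureTheory.integral_const_mul]
    rfl
  · rfl

lemma J_ne (n : ℕ) (c : Fin m) {p q : ℕ} (h : p ≠ q) : J n c p q = 0 := by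
  unfold J
  rw [Imono_ne p q h, Imono_ne (p+1) (q+1) (by omega)]
  simp

lemma J_00 (n : ℕ) (c : Fin m) (h : (c : ℕ) < n) : J n c 0 0 = 0 := by
  unfold J
  rw [if_pos h, Imono_11_eq_half]
  ring

variable {n : ℕ}

/-- coefficient of a choice -/
def wcoef (B : Fin n → Fin m → ℂ) (j : Fin n) (e : Option (Fin m × Fin m)) : ℂ :=
  e.elim (-1) (fun kl => 4 * B j kl.1 * (starRingEnd ℂ) (B j kl.2))

def Pdeg (F : Fin n → Option (Fin m × Fin m)) (c : Fin m) : ℕ :=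
  (Finset.univ.filter (fun j => (F j).map Prod.fst = some c)).card

def Qdeg (F : Fin n → Option (Fin m × Fin m)) (c : Fin m) : ℕ :=
  (Finset.univ.filter (fun j => (F j).map Prod.snd = some c)).card

def term (B : Fin n → Fin m → ℂ) (F : Fin n → Option (Fin m × Fin m)) : ℂ :=
  (∏ j, wcoef B j (F j)) * ∏ c : Fin m, J n c (Pdeg F c) (Qdeg F c)

/-- collect a product over `Fin n` into powers per fiber -/
lemma prod_collect (F : Fin n → Option (Fin m × Fin m)) (v : Fin m → ℂ)
    (pr : Fin m × Fin m → Fin m) :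
    (∏ j, (F j).elim 1 (fun kl => v (pr kl)))
      = ∏ c : Fin m, v c ^ ((Finset.univ.filter (fun j => (F j).map pr = some c)).card) := by
  have hmap : ∀ (e : Option (Fin m × Fin m)), e.elim 1 (fun kl => v (pr kl))
      = (e.map pr).elim (1 : ℂ) v := by
    rintro (_ | kl) <;> rfl
  simp_rw [hmap]
  rw [← Finset.prod_fiberwise_of_maps_to (g := fun j => (F j).map pr)
    (fun j _ => Finset.mem_univ _) (fun j => ((F j).map pr).elim (1:ℂ) v)]
  rw [Fintype.prod_option]
  have h1 : ∀ o : Option (Fin m),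
      (∏ j ∈ Finset.univ.filter (fun j => (F j).map pr = o), ((F j).map pr).elim (1:ℂ) v)
      = o.elim (1:ℂ) v ^ (Finset.univ.filter (fun j => (F j).map pr = o)).card := by
    intro o
    rw [Finset.prod_congr rfl (fun j hj => by rw [(Finset.mem_filter.mp hj).2]),
      Finset.prod_const]
  rw [h1 none]
  simp only [Option.elim_none, one_pow, one_mul]
  exact Finset.prod_congr rfl (fun c _ => h1 (some c))

/-- single factor expansion -/
lemma factor_expand (B : Fin n → Fin m → ℂ) (α : Fin m → ℂ) (j : Fin n) :
    4 * (∑ k, α k * B j k) * (starRingEnd ℂ) (∑ k, α k * B j k) - 1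
      = ∑ e : Option (Fin m × Fin m), wcoef B j e
          * (e.elim 1 (fun kl => α kl.1))
          * (e.elim 1 (fun kl => (starRingEnd ℂ) (α kl.2))) := by
  rw [Fintype.sum_option]
  simp only [wcoef, Option.elim_none, Option.elim_some]
  rw [Fintype.sum_prod_type]
  have hconj : (starRingEnd ℂ) (∑ k, α k * B j k)
      = ∑ l, (starRingEnd ℂ) (α l) * (starRingEnd ℂ) (B j l) := by
    rw [map_sum]
    exact Finset.sum_congr rfl (fun l _ => by rw [map_mul])
  rw [hconj, mul_assoc, Finset.sum_mul_sum]
  simp only [Finset.mul_sum]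
  rw [sub_eq_add_neg, add_comm]
  congr 1
  · norm_num
  · exact Finset.sum_congr rfl fun k _ => Finset.sum_congr rfl fun l _ => by ring

lemma head_filter_eq (hnm : n ≤ m) :
    Finset.univ.filter (fun c : Fin m => (c : ℕ) < n)
      = Finset.univ.map (Fin.castLEEmb hnm) := by
  ext c
  simp only [Finset.mem_filter, Finset.mem_univ, true_and, Finset.mem_map,
    Fin.castLEEmb_apply]
  constructor
  · intro hc
    exact ⟨⟨(c : ℕ), hc⟩, rfl⟩
  · rintro ⟨a, -, rfl⟩
    exact a.2

lemma card_head_filter (hnm : n ≤ m) :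
    (Finset.univ.filter (fun c : Fin m => (c : ℕ) < n)).card = n := by
  rw [head_filter_eq hnm, Finset.card_map, Finset.card_univ, Fintype.card_fin]

lemma head_prod_reindex (hnm : n ≤ m) (g : Fin m → ℂ) :
    (∏ j : Fin n, g (Fin.castLE hnm j))
      = ∏ c : Fin m, (if (c : ℕ) < n then g c else 1) := by
  rw [← Finset.prod_filter, head_filter_eq hnm, Finset.prod_map]
  rfl

lemma head_sum_reindex (hnm : n ≤ m) (g : Fin m → ℂ) :
    (∑ j : Fin n, g (Fin.castLE hnm j))
      = ∑ c : Fin m, (if (c : ℕ) < n then g c else 0) := by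
  rw [← Finset.sum_filter, head_filter_eq hnm, Finset.sum_map]
  rfl

/-- pointwise expansion of the full integrand -/
lemma integrand_expand (hnm : n ≤ m) (B : Fin n → Fin m → ℂ) (α : Fin m → ℂ) :
    (∏ c, Efac (α c)) *
      (∏ j : Fin n, (4 * (∑ k, α k * B j k) * (starRingEnd ℂ) (∑ k, α k * B j k) - 1)) *
      (∏ j : Fin n, (α (Fin.castLE hnm j) * (starRingEnd ℂ) (α (Fin.castLE hnm j)) - 1/2))
    = ∑ F : Fin n → Option (Fin m × Fin m),
        (∏ j, wcoef B j (F j)) * ∏ c : Fin m, hfun n c (Pdeg F c) (Qdeg F c) (α c) := by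
  have h1 : (∏ j : Fin n, (4 * (∑ k, α k * B j k) * (starRingEnd ℂ) (∑ k, α k * B j k) - 1))
      = ∑ F : Fin n → Option (Fin m × Fin m), ∏ j, (wcoef B j (F j)
          * ((F j).elim 1 (fun kl => α kl.1))
          * ((F j).elim 1 (fun kl => (starRingEnd ℂ) (α kl.2)))) := by
    rw [Finset.prod_congr rfl (fun j _ => factor_expand B α j)]
    rw [Finset.prod_univ_sum]
    rw [Fintype.piFinset_univ]
  rw [h1, Finset.mul_sum, Finset.sum_mul]
  refine Finset.sum_congr rfl (fun F _ => ?_)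
  rw [Finset.prod_mul_distrib, Finset.prod_mul_distrib]
  rw [prod_collect F (fun c => α c) Prod.fst, prod_collect F (fun c => (starRingEnd ℂ) (α c)) Prod.snd]
  rw [head_prod_reindex hnm (fun c => α c * (starRingEnd ℂ) (α c) - 1/2)]
  have : ∀ c : Fin m, hfun n c (Pdeg F c) (Qdeg F c) (α c)
      = Efac (α c) * ((α c) ^ (Pdeg F c) * ((starRingEnd ℂ) (α c)) ^ (Qdeg F c)
          * (if (c : ℕ) < n then α c * (starRingEnd ℂ) (α c) - 1/2 else 1)) := by
    intro c
    unfold hfun mono Pdeg Qdeg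
    ring
  rw [Finset.prod_congr rfl (fun c _ => this c)]
  rw [Finset.prod_mul_distrib, Finset.prod_mul_distrib, Finset.prod_mul_distrib]
  unfold Pdeg Qdeg
  ring

/-- the expanded value of the integral -/
lemma expand_integral (hnm : n ≤ m) (B : Fin n → Fin m → ℂ) :
    (∫ α : Fin m → ℂ, (∏ c, Efac (α c)) *
      (∏ j : Fin n, (4 * (∑ k, α k * B j k) * (starRingEnd ℂ) (∑ k, α k * B j k) - 1)) *
      (∏ j : Fin n, (α (Fin.castLE hnm j) * (starRingEnd ℂ) (α (Fin.castLE hnm j)) - 1/2)))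
    = ∑ F : Fin n → Option (Fin m × Fin m), term B F := by
  have h0 : ∀ α : Fin m → ℂ, (∏ c, Efac (α c)) *
      (∏ j : Fin n, (4 * (∑ k, α k * B j k) * (starRingEnd ℂ) (∑ k, α k * B j k) - 1)) *
      (∏ j : Fin n, (α (Fin.castLE hnm j) * (starRingEnd ℂ) (α (Fin.castLE hnm j)) - 1/2))
      = ∑ F : Fin n → Option (Fin m × Fin m),
        (∏ j, wcoef B j (F j)) * ∏ c : Fin m, hfun n c (Pdeg F c) (Qdeg F c) (α c) :=
    integrand_expand hnm B
  simp_rw [h0]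
  rw [MeasureTheory.volume_pi]
  rw [integral_finset_sum Finset.univ
    (fun F _ => (Integrable.fintype_prod_dep
      (fun c => hfun_integrable n c (Pdeg F c) (Qdeg F c))).const_mul _)]
  refine Finset.sum_congr rfl (fun F _ => ?_)
  rw [MeasureTheory.integral_const_mul, integral_fintype_prod_eq_prod (ι := Fin m)
    (fun c => hfun n c (Pdeg F c) (Qdeg F c))]
  rw [Finset.prod_congr rfl (fun c _ => hfun_integral n c _ _)]
  rfl

lemma sum_deg_le (F : Fin n → Option (Fin m × Fin m)) (pr : Fin m × Fin m → Fin m) :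
    ∑ c : Fin m, (Finset.univ.filter (fun j => (F j).map pr = some c)).card ≤ n := by
  have h := Finset.card_eq_sum_card_fiberwise
    (f := fun j : Fin n => (F j).map pr) (s := Finset.univ) (t := Finset.univ)
    (fun j _ => Finset.mem_univ _)
  rw [Finset.card_univ, Fintype.card_fin, Fintype.sum_option] at h
  omega

lemma deg_pos {F : Fin n → Option (Fin m × Fin m)} {j : Fin n} {kl : Fin m × Fin m}
    (h : F j = some kl) (pr : Fin m × Fin m → Fin m) :
    1 ≤ (Finset.univ.filter (fun j => (F j).map pr = some (pr kl))).card := by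
  rw [Nat.succ_le_iff, Finset.card_pos]
  exact ⟨j, Finset.mem_filter.mpr ⟨Finset.mem_univ _, by rw [h]; rfl⟩⟩

lemma good_of_ne_zero (hnm : n ≤ m) {F : Fin n → Option (Fin m × Fin m)}
    (hz : (∏ c : Fin m, J n c (Pdeg F c) (Qdeg F c)) ≠ 0) :
    ∀ j kl, F j = some kl → (kl.1 : ℕ) < n ∧ (kl.2 : ℕ) < n := by
  have hfac : ∀ c : Fin m, J n c (Pdeg F c) (Qdeg F c) ≠ 0 :=
    fun c => Finset.prod_ne_zero_iff.mp hz c (Finset.mem_univ c)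
  have hPQ : ∀ c, Pdeg F c = Qdeg F c := by
    intro c
    by_contra hne
    exact hfac c (J_ne n c hne)
  have hhead : ∀ c : Fin m, (c : ℕ) < n → 1 ≤ Pdeg F c := by
    intro c hc
    by_contra hlt
    have h0 : Pdeg F c = 0 := by omega
    refine hfac c ?_
    rw [← hPQ c, h0]
    exact J_00 n c hc
  have main : ∀ (pr : Fin m × Fin m → Fin m) (c0 : Fin m),
      (∀ c : Fin m, (c : ℕ) < n →
        1 ≤ (Finset.univ.filter (fun j => (F j).map pr = some c)).card) →
      1 ≤ (Finset.univ.filter (fun j => (F j).map pr = some c0)).card →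
      (c0 : ℕ) < n := by
    intro pr c0 hh h1
    by_contra hc1
    have hnotmem : c0 ∉ Finset.univ.filter (fun c : Fin m => (c : ℕ) < n) := by
      simp [hc1]
    have hle : ∑ c ∈ insert c0 (Finset.univ.filter (fun c : Fin m => (c : ℕ) < n)),
        (Finset.univ.filter (fun j => (F j).map pr = some c)).card
        ≤ ∑ c : Fin m, (Finset.univ.filter (fun j => (F j).map pr = some c)).card :=
      Finset.sum_le_sum_of_subset (Finset.subset_univ _)
    rw [Finset.sum_insert hnotmem] at hle
    have hlow : n ≤ ∑ c ∈ Finset.univ.filter (fun c : Fin m => (c : ℕ) < n),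
        (Finset.univ.filter (fun j => (F j).map pr = some c)).card := by
      calc n = (Finset.univ.filter (fun c : Fin m => (c : ℕ) < n)).card :=
            (card_head_filter hnm).symm
        _ = ∑ c ∈ Finset.univ.filter (fun c : Fin m => (c : ℕ) < n), 1 := by
            rw [Finset.sum_const, smul_eq_mul, mul_one]
        _ ≤ _ := Finset.sum_le_sum (fun c hc => hh c (Finset.mem_filter.mp hc).2)
    have hup := sum_deg_le F pr
    omega
  intro j kl hj
  constructor
  · exact main Prod.fst kl.1 (fun c hc => hhead c hc) (deg_pos hj Prod.fst)
  · refine main Prod.snd kl.2 (fun c hc => ?_) (deg_pos hj Prod.snd)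
    have := hhead c hc
    rw [hPQ c] at this
    exact this

lemma term_eq (hnm : n ≤ m) (B1 B2 : Fin n → Fin m → ℂ)
    (hB : ∀ j (k : Fin m), (k : ℕ) < n → B1 j k = B2 j k)
    (F : Fin n → Option (Fin m × Fin m)) : term B1 F = term B2 F := by
  by_cases hz : (∏ c : Fin m, J n c (Pdeg F c) (Qdeg F c)) = 0
  · unfold term
    rw [hz, mul_zero, mul_zero]
  · unfold term
    congr 1
    refine Finset.prod_congr rfl (fun j _ => ?_)
    cases hF : F j with
    | none => rfl
    | some kl =>
      obtain ⟨h1, h2⟩ := good_of_ne_zero hnm hz j kl hF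
      simp only [wcoef, Option.elim_some]
      rw [hB j kl.1 h1, hB j kl.2 h2]

lemma habs_sq (s : ℂ) : ((‖s‖ : ℝ) : ℂ) ^ 2 = s * (starRingEnd ℂ) s := by
  rw [← Complex.ofReal_pow, Complex.sq_norm, Complex.mul_conj]

lemma coerce_pointwise (hnm : n ≤ m) (B : Fin n → Fin m → ℂ) (α : Fin m → ℂ) :
    ((Real.exp (-2 * ∑ j, ‖(α j)‖ ^ 2) *
      (∏ j : Fin n, (4 * ‖(∑ k, α k * B j k)‖ ^ 2 - 1)) *
      ∏ j : Fin n, (‖(α (Fin.castLE hnm j))‖ ^ 2 - 1 / 2) : ℝ) : ℂ)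
    = (∏ c, Efac (α c)) *
      (∏ j : Fin n, (4 * (∑ k, α k * B j k) * (starRingEnd ℂ) (∑ k, α k * B j k) - 1)) *
      (∏ j : Fin n, (α (Fin.castLE hnm j) * (starRingEnd ℂ) (α (Fin.castLE hnm j)) - 1/2)) := by
  rw [Complex.ofReal_mul, Complex.ofReal_mul]
  have hexp : ((Real.exp (-2 * ∑ j, ‖(α j)‖ ^ 2) : ℝ) : ℂ) = ∏ c, Efac (α c) := by
    rw [Complex.ofReal_exp]
    have : ((-2 * ∑ j, ‖(α j)‖ ^ 2 : ℝ) : ℂ)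
        = ∑ c : Fin m, (-2 * ((‖(α c)‖ ^ 2 : ℝ) : ℂ)) := by
      push_cast
      rw [Finset.mul_sum]
    rw [this, Complex.exp_sum]
    rfl
  have hfac : ∀ s : ℂ, ((4 * ‖s‖ ^ 2 - 1 : ℝ) : ℂ)
      = 4 * s * (starRingEnd ℂ) s - 1 := by
    intro s
    push_cast
    rw [habs_sq s]
    ring
  have hhead : ∀ s : ℂ, ((‖s‖ ^ 2 - 1 / 2 : ℝ) : ℂ)
      = s * (starRingEnd ℂ) s - 1/2 := by
    intro s
    push_cast
    rw [habs_sq s]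
  rw [hexp]
  congr 1
  · congr 1
    rw [Complex.ofReal_prod]
    exact Finset.prod_congr rfl (fun j _ => hfac _)
  · rw [Complex.ofReal_prod]
    exact Finset.prod_congr rfl (fun j _ => hhead _)

lemma key_integral (hnm : n ≤ m) (B : Fin n → Fin m → ℂ) :
    (((∫ α : Fin m → ℂ, Real.exp (-2 * ∑ j, ‖(α j)‖ ^ 2) *
        (∏ j : Fin n, (4 * ‖(∑ k, α k * B j k)‖ ^ 2 - 1)) *
        ∏ j : Fin n, (‖(α (Fin.castLE hnm j))‖ ^ 2 - 1 / 2)) : ℝ) : ℂ)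
    = ∑ F : Fin n → Option (Fin m × Fin m), term B F := by
  have h0 : (∫ α : Fin m → ℂ, ((Real.exp (-2 * ∑ j, ‖(α j)‖ ^ 2) *
        (∏ j : Fin n, (4 * ‖(∑ k, α k * B j k)‖ ^ 2 - 1)) *
        ∏ j : Fin n, (‖(α (Fin.castLE hnm j))‖ ^ 2 - 1 / 2) : ℝ) : ℂ))
      = ∑ F : Fin n → Option (Fin m × Fin m), term B F := by
    rw [← expand_integral hnm B]
    exact congrArg (integral volume) (funext fun α => coerce_pointwise hnm B α)
  rw [← h0]
  exact (integral_ofReal (𝕜 := ℂ)).symm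

end TruncAux


open TruncAux

/-- For `n ≤ m` and an `m × m` unitary `U`, in the integral
`∫_{ℂ^m} exp(−2 ∑ |α_j|²) · ∏_{j<n} (4|∑_k α_k U_{k,j}|² − 1) · ∏_{j<n} (|α_j|² − 1/2) d²α`
the inner sums over `k` may be truncated from `m` to `n` without changing the value. -/
theorem integral_truncate_sum (m n : ℕ) (hm : 0 < m) (hn : 0 < n) (hnm : n ≤ m)
    (U : Matrix (Fin m) (Fin m) ℂ) (hU : U * U.conjTranspose = 1) :
    (∫ α : Fin m → ℂ,
        Real.exp (-2 * ∑ j, ‖α j‖ ^ 2) *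
          (∏ j : Fin n, (4 * ‖∑ k, α k * U k (Fin.castLE hnm j)‖ ^ 2 - 1)) *
          ∏ j : Fin n, (‖α (Fin.castLE hnm j)‖ ^ 2 - 1 / 2)) =
    ∫ α : Fin m → ℂ,
        Real.exp (-2 * ∑ j, ‖α j‖ ^ 2) *
          (∏ j : Fin n, (4 * ‖
              (∑ k : Fin n, α (Fin.castLE hnm k) * U (Fin.castLE hnm k) (Fin.castLE hnm j))‖ ^ 2
            - 1)) *
          ∏ j : Fin n, (‖α (Fin.castLE hnm j)‖ ^ 2 - 1 / 2) := by
  have hsum : ∀ (α : Fin m → ℂ) (j : Fin n),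
      (∑ k : Fin n, α (Fin.castLE hnm k) * U (Fin.castLE hnm k) (Fin.castLE hnm j))
      = ∑ k : Fin m, α k * (if (k : ℕ) < n then U k (Fin.castLE hnm j) else 0) := by
    intro α j
    rw [head_sum_reindex hnm (fun k => α k * U k (Fin.castLE hnm j))]
    refine Finset.sum_congr rfl (fun k _ => ?_)
    by_cases hk : (k : ℕ) < n <;> simp [hk]
  have hRw : (∫ α : Fin m → ℂ,
        Real.exp (-2 * ∑ j, ‖(α j)‖ ^ 2) *
          (∏ j : Fin n, (4 * ‖
              (∑ k : Fin n, α (Fin.castLE hnm k) * U (Fin.castLE hnm k) (Fin.castLE hnm j))‖ ^ 2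
            - 1)) *
          ∏ j : Fin n, (‖(α (Fin.castLE hnm j))‖ ^ 2 - 1 / 2))
      = ∫ α : Fin m → ℂ,
        Real.exp (-2 * ∑ j, ‖(α j)‖ ^ 2) *
          (∏ j : Fin n, (4 * ‖
              (∑ k : Fin m, α k * (if (k : ℕ) < n then U k (Fin.castLE hnm j) else 0))‖ ^ 2
            - 1)) *
          ∏ j : Fin n, (‖(α (Fin.castLE hnm j))‖ ^ 2 - 1 / 2) := by
    refine congrArg (integral volume) (funext fun α => ?_)
    congr 1
    congr 1
    exact Finset.prod_congr rfl (fun j _ => by rw [hsum α j])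
  rw [hRw, ← Complex.ofReal_inj]
  have h1 := key_integral hnm (fun (j : Fin n) (k : Fin m) => U k (Fin.castLE hnm j))
  have h2 := key_integral hnm
    (fun (j : Fin n) (k : Fin m) => if (k : ℕ) < n then U k (Fin.castLE hnm j) else 0)
  beta_reduce at h1 h2
  rw [h1, h2]
  exact Finset.sum_congr rfl (fun F _ => term_eq hnm _ _ (fun j k hk => by simp [hk]) F)
end
end

section
/- Let n be a positive integer and let A be any n × n complex matrix. Then ∫_{ℂ^n} exp(−2 ∑_{j=1}^n |α_j|²) · ∏_{j=1}^n (4·|∑_{k=1}^n α_k A_{k,j}|² − 1) · ∏_{j=1}^n (|α_j|² − 1/2) d²α = 4^n · ∫_{ℂ^n} exp(−2 ∑_{j=1}^n |α_j|²) · ∏_{j=1}^n |∑_{k=1}^n α_k A_{k,j}|² · ∏_{j=1}^n (|α_j|² − 1/2) d²α; that is, replacing each factor (4·|·|² − 1) by 4·|·|² does not change the value of the integral. -/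
open MeasureTheory

section IDMaux

open Complex Real


noncomputable def IDMg (a b : ℕ) (z : ℂ) : ℂ :=
  (rexp (-2 * ‖z‖ ^ 2) : ℂ) *
    (z ^ a * ((starRingEnd ℂ) z) ^ b * (z * (starRingEnd ℂ) z - 1 / 2))

lemma integrable_rexp_neg_mul_sq_norm {c : ℝ} (hc : 0 < c) :
    Integrable (fun z : ℂ => rexp (-c * ‖z‖ ^ 2)) := by
  have h := (GaussianFourier.integrable_cexp_neg_mul_sq_norm_add
    (V := ℂ) (b := (c : ℂ)) (by simpa using hc) 0 0).norm
  simpa [Complex.norm_exp, ← Complex.ofReal_pow, neg_mul] using h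

lemma pow_mul_exp_bound (m : ℕ) (z : ℂ) :
    ‖z‖ ^ m * rexp (-2 * ‖z‖ ^ 2) ≤
      rexp (-2 * ‖z‖ ^ 2) + (m.factorial : ℝ) * rexp (-1 * ‖z‖ ^ 2) := by
  set s := ‖z‖ with hs
  have hs0 : 0 ≤ s := norm_nonneg z
  have key : s ^ m ≤ 1 + (m.factorial : ℝ) * rexp (s ^ 2) := by
    rcases le_total s 1 with h | h
    · have : s ^ m ≤ 1 := pow_le_one₀ hs0 h
      nlinarith [Real.exp_pos (s ^ 2),
        (Nat.one_le_cast (α := ℝ)).mpr (Nat.one_le_iff_ne_zero.mpr (Nat.factorial_ne_zero m))]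
    · have h1 : s ^ m ≤ (s ^ 2) ^ m := by
        calc s ^ m ≤ s ^ (2 * m) := pow_le_pow_right₀ h (by omega)
        _ = (s ^ 2) ^ m := by rw [pow_mul]
      have h2 : (s ^ 2) ^ m / (m.factorial : ℝ) ≤ rexp (s ^ 2) := by
        calc (s ^ 2) ^ m / (m.factorial : ℝ)
            ≤ ∑ i ∈ Finset.range (m + 1), (s ^ 2) ^ i / (i.factorial : ℝ) := by
              apply Finset.single_le_sum (f := fun i => (s ^ 2) ^ i / (i.factorial : ℝ))
                (fun i _ => by positivity) (Finset.self_mem_range_succ m)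
          _ ≤ rexp (s ^ 2) := Real.sum_le_exp_of_nonneg (by positivity) _
      have hf : (0:ℝ) < (m.factorial : ℝ) := by positivity
      have := (div_le_iff₀ hf).mp h2
      nlinarith
  have hexp : rexp (s ^ 2) * rexp (-2 * s ^ 2) = rexp (-1 * s ^ 2) := by
    rw [← Real.exp_add]; ring_nf
  have hepos : (0:ℝ) < rexp (-2 * s ^ 2) := Real.exp_pos _
  nlinarith [mul_le_mul_of_nonneg_right key hepos.le]

lemma cont_pow_gauss (m : ℕ) :
    Continuous (fun z : ℂ => ‖z‖ ^ m * rexp (-2 * ‖z‖ ^ 2)) :=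
  (continuous_norm.pow m).mul
    (Real.continuous_exp.comp (continuous_const.mul (continuous_norm.pow 2)))

lemma integrable_pow_mul_gauss (m : ℕ) :
    Integrable (fun z : ℂ => ‖z‖ ^ m * rexp (-2 * ‖z‖ ^ 2)) := by
  have hint : Integrable (fun z : ℂ =>
      rexp (-2 * ‖z‖ ^ 2) + (m.factorial : ℝ) * rexp (-1 * ‖z‖ ^ 2)) :=
    (integrable_rexp_neg_mul_sq_norm two_pos).add
      ((integrable_rexp_neg_mul_sq_norm one_pos).const_mul _)
  refine hint.mono (cont_pow_gauss m).aestronglyMeasurable ?_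
  refine Filter.Eventually.of_forall fun z => ?_
  have h1 : (0:ℝ) ≤ ‖z‖ ^ m * rexp (-2 * ‖z‖ ^ 2) := by positivity
  have h2 : (0:ℝ) ≤ rexp (-2 * ‖z‖ ^ 2) +
      (m.factorial : ℝ) * rexp (-1 * ‖z‖ ^ 2) := by positivity
  rw [Real.norm_eq_abs, Real.norm_eq_abs, _root_.abs_of_nonneg h1, _root_.abs_of_nonneg h2]
  exact pow_mul_exp_bound m z

lemma integrable_IDMg (a b : ℕ) : Integrable (IDMg a b) := by
  have hint : Integrable (fun z : ℂ =>
      ‖z‖ ^ (a + b + 2) * rexp (-2 * ‖z‖ ^ 2) +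
        (1 / 2) * (‖z‖ ^ (a + b) * rexp (-2 * ‖z‖ ^ 2))) :=
    (integrable_pow_mul_gauss _).add ((integrable_pow_mul_gauss _).const_mul _)
  refine hint.mono ?_ ?_
  · apply Continuous.aestronglyMeasurable
    unfold IDMg
    exact (Complex.continuous_ofReal.comp (Real.continuous_exp.comp
      (continuous_const.mul (continuous_norm.pow 2)))).mul
      (((continuous_pow a).mul ((Complex.continuous_conj.pow b))).mul
        ((continuous_id.mul Complex.continuous_conj).sub continuous_const))
  · refine Filter.Eventually.of_forall fun z => ?_
    have h2 : (0:ℝ) ≤ ‖z‖ ^ (a + b + 2) * rexp (-2 * ‖z‖ ^ 2) +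
        (1 / 2) * (‖z‖ ^ (a + b) * rexp (-2 * ‖z‖ ^ 2)) := by positivity
    rw [Real.norm_eq_abs, _root_.abs_of_nonneg h2]
    have hnorm : ‖IDMg a b z‖ ≤ rexp (-2 * ‖z‖ ^ 2) *
        (‖z‖ ^ (a + b) * (‖z‖ ^ 2 + 1 / 2)) := by
      unfold IDMg
      rw [norm_mul, norm_mul, norm_mul]
      have e1 : ‖((rexp (-2 * ‖z‖ ^ 2) : ℝ) : ℂ)‖ = rexp (-2 * ‖z‖ ^ 2) := by
        rw [Complex.norm_real, Real.norm_eq_abs, _root_.abs_of_nonneg (Real.exp_pos _).le]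
      have e2 : ‖z ^ a‖ = ‖z‖ ^ a := by
        rw [norm_pow]
      have e3 : ‖((starRingEnd ℂ) z) ^ b‖ = ‖z‖ ^ b := by
        rw [norm_pow, Complex.norm_conj]
      have e4 : ‖z * (starRingEnd ℂ) z - 1 / 2‖ ≤ ‖z‖ ^ 2 + 1 / 2 := by
        refine (norm_sub_le _ _).trans ?_
        rw [norm_mul, Complex.norm_conj]
        simp [sq]
      rw [e1, e2, e3]
      have key := mul_le_mul_of_nonneg_left e4 (show (0:ℝ) ≤ rexp (-2 * ‖z‖ ^ 2) *
        ‖z‖ ^ a * ‖z‖ ^ b from by positivity)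
      calc rexp (-2 * ‖z‖ ^ 2) * (‖z‖ ^ a * ‖z‖ ^ b *
            ‖z * (starRingEnd ℂ) z - 1 / 2‖)
          = rexp (-2 * ‖z‖ ^ 2) * ‖z‖ ^ a * ‖z‖ ^ b *
            ‖z * (starRingEnd ℂ) z - 1 / 2‖ := by ring
        _ ≤ rexp (-2 * ‖z‖ ^ 2) * ‖z‖ ^ a * ‖z‖ ^ b *
            (‖z‖ ^ 2 + 1 / 2) := key
        _ = rexp (-2 * ‖z‖ ^ 2) *
            (‖z‖ ^ (a + b) * (‖z‖ ^ 2 + 1 / 2)) := by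
            rw [pow_add]; ring
    refine hnorm.trans_eq ?_
    rw [show a + b + 2 = (a + b) + 2 from rfl, pow_add]
    ring

lemma radial_eval (q : ℕ) :
    ∫ z : ℂ, ‖z‖ ^ q * rexp (-2 * ‖z‖ ^ 2) =
      2 * π / 2 * (2:ℝ) ^ (-((q:ℝ) + 2) / 2) * Real.Gamma (((q:ℝ) + 2) / 2) := by
  have h := Complex.integral_rpow_mul_exp_neg_mul_rpow (p := 2) (q := (q:ℝ)) (b := 2)
    one_le_two (lt_of_lt_of_le (by norm_num) (Nat.cast_nonneg q)) two_pos
  rw [← h]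
  congr 1 with z
  norm_cast

lemma real_gauss_moment0 :
    ∫ z : ℂ, rexp (-2 * ‖z‖ ^ 2) = π / 2 := by
  have h := radial_eval 0
  rw [show (-(((0:ℕ):ℝ) + 2) / 2 : ℝ) = ((-1:ℤ):ℝ) by norm_num, Real.rpow_intCast,
    show ((((0:ℕ):ℝ)) + 2) / 2 = 1 by norm_num, Real.Gamma_one] at h
  simp only [pow_zero, one_mul] at h
  rw [h]
  norm_num
  ring

lemma real_gauss_moment2 :
    ∫ z : ℂ, ‖z‖ ^ 2 * rexp (-2 * ‖z‖ ^ 2) = π / 4 := by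
  have h := radial_eval 2
  rw [show (-(((2:ℕ):ℝ) + 2) / 2 : ℝ) = ((-2:ℤ):ℝ) by norm_num, Real.rpow_intCast,
    show ((((2:ℕ):ℝ)) + 2) / 2 = 2 by norm_num, Real.Gamma_two] at h
  rw [h]
  norm_num [zpow_neg]
  ring

lemma integral_IDMg_zero_zero : ∫ z : ℂ, IDMg 0 0 z = 0 := by
  have hreal : ∫ z : ℂ, (‖z‖ ^ 2 * rexp (-2 * ‖z‖ ^ 2)
      - 1 / 2 * rexp (-2 * ‖z‖ ^ 2)) = 0 := by
    rw [integral_sub (integrable_pow_mul_gauss 2)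
      (by simpa using (integrable_pow_mul_gauss 0).const_mul (1/2) :
        Integrable (fun z : ℂ => 1 / 2 * rexp (-2 * ‖z‖ ^ 2)))]
    rw [real_gauss_moment2, integral_const_mul, real_gauss_moment0]
    ring
  calc ∫ z : ℂ, IDMg 0 0 z
      = ∫ z : ℂ, ((‖z‖ ^ 2 * rexp (-2 * ‖z‖ ^ 2)
          - 1 / 2 * rexp (-2 * ‖z‖ ^ 2) : ℝ) : ℂ) := by
        congr 1
        funext z
        unfold IDMg
        rw [Complex.mul_conj, ← Complex.sq_norm]
        push_cast
        ring
    _ = ((∫ z : ℂ, (‖z‖ ^ 2 * rexp (-2 * ‖z‖ ^ 2)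
          - 1 / 2 * rexp (-2 * ‖z‖ ^ 2)) : ℝ) : ℂ) := integral_ofReal
    _ = 0 := by rw [hreal]; norm_num

lemma integral_IDMg_zero (b : ℕ) : ∫ z : ℂ, IDMg 0 b z = 0 := by
  rcases Nat.eq_zero_or_pos b with hb | hb
  · subst hb; exact integral_IDMg_zero_zero
  · set ω : Circle := Circle.exp (π / b) with hω
    have hωb : (ω : ℂ) ^ b = -1 := by
      rw [hω, Circle.coe_exp, ← Complex.exp_nat_mul]
      rw [show (b : ℂ) * (↑(π / b) * Complex.I) = π * Complex.I by
        push_cast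
        rw [show (b:ℂ) * ((π:ℂ)/b * Complex.I) = ((b:ℂ)/b) * ((π:ℂ) * Complex.I) by ring,
          div_self (Nat.cast_ne_zero.mpr hb.ne'), one_mul]]
      exact Complex.exp_pi_mul_I
    have mp := (rotation ω).measurePreserving
    have hcomp := mp.integral_comp (rotation ω).toHomeomorph.measurableEmbedding (IDMg 0 b)
    have hpt : ∀ z : ℂ, IDMg 0 b ((rotation ω) z) = ((starRingEnd ℂ) (ω : ℂ)) ^ b * IDMg 0 b z := by
      intro z
      rw [rotation_apply]
      unfold IDMg
      have h1 : ‖(ω : ℂ) * z‖ = ‖z‖ := by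
        rw [norm_mul, Circle.norm_coe, one_mul]
      have h2 : (ω : ℂ) * (starRingEnd ℂ) (ω : ℂ) = 1 := by
        rw [Complex.mul_conj, Circle.normSq_coe]
        norm_num
      rw [h1, map_mul, mul_pow]
      simp only [pow_zero, one_mul]
      linear_combination (((rexp (-2 * ‖z‖ ^ 2) : ℝ) : ℂ) *
        ((starRingEnd ℂ) (ω : ℂ)) ^ b * ((starRingEnd ℂ) z) ^ b * z * ((starRingEnd ℂ) z)) * h2
    simp_rw [hpt] at hcomp
    rw [integral_const_mul] at hcomp
    have hconj : ((starRingEnd ℂ) (ω : ℂ)) ^ b = -1 := by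
      rw [← map_pow, hωb, map_neg, map_one]
    rw [hconj] at hcomp
    linear_combination (-(1/2) : ℂ) * hcomp

noncomputable def IDMtermO {n : ℕ} (A : Matrix (Fin n) (Fin n) ℂ) (α : Fin n → ℂ) (j : Fin n) :
    Option (Fin n × Fin n) → ℂ
  | none => -1
  | some c => 4 * ((α c.1 * (starRingEnd ℂ) (α c.2)) * (A c.1 j * (starRingEnd ℂ) (A c.2 j)))

noncomputable def IDMTermL {n : ℕ} (A : Matrix (Fin n) (Fin n) ℂ)
    (p : Fin n → Option (Fin n × Fin n)) : (Fin n → ℂ) → ℂ :=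
  fun α => (∏ j, IDMtermO A α j (p j)) * ∏ k, IDMg 0 0 (α k)

noncomputable def IDMTermR {n : ℕ} (A : Matrix (Fin n) (Fin n) ℂ)
    (q : Fin n → Fin n × Fin n) : (Fin n → ℂ) → ℂ :=
  fun α => (∏ j, (α (q j).1 * (starRingEnd ℂ) (α (q j).2)) *
    (A (q j).1 j * (starRingEnd ℂ) (A (q j).2 j))) * ∏ k, IDMg 0 0 (α k)

lemma IDM_cast_abs_sq (z : ℂ) : ((‖z‖ ^ 2 : ℝ) : ℂ) = z * (starRingEnd ℂ) z := by
  rw [Complex.sq_norm, Complex.mul_conj]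

lemma IDM_exp_prod {n : ℕ} (α : Fin n → ℂ) :
    ((rexp (-2 * ∑ j, ‖α j‖ ^ 2) : ℝ) : ℂ) =
      ∏ k, ((rexp (-2 * ‖α k‖ ^ 2) : ℝ) : ℂ) := by
  rw [← Complex.ofReal_prod, ← Real.exp_sum, Finset.mul_sum]

lemma IDM_g00 (z : ℂ) : IDMg 0 0 z =
    ((rexp (-2 * ‖z‖ ^ 2) : ℝ) : ℂ) * (z * (starRingEnd ℂ) z - 1 / 2) := by
  unfold IDMg; simp

lemma IDM_factor_sum {n : ℕ} (A : Matrix (Fin n) (Fin n) ℂ) (α : Fin n → ℂ) (j : Fin n) :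
    4 * ((∑ k, α k * A k j) * (starRingEnd ℂ) (∑ k, α k * A k j)) - 1 =
      ∑ o : Option (Fin n × Fin n), IDMtermO A α j o := by
  rw [Fintype.sum_option]
  have hconj : (starRingEnd ℂ) (∑ k, α k * A k j) =
      ∑ l, (starRingEnd ℂ) (α l) * (starRingEnd ℂ) (A l j) := by
    rw [map_sum]; simp [map_mul]
  rw [hconj, Finset.sum_mul_sum, Fintype.sum_prod_type, sub_eq_neg_add]
  simp only [IDMtermO]
  congr 1
  rw [Finset.mul_sum]
  refine Finset.sum_congr rfl fun k _ => ?_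
  rw [Finset.mul_sum]
  refine Finset.sum_congr rfl fun l _ => ?_
  ring

lemma IDM_integrand_L {n : ℕ} (A : Matrix (Fin n) (Fin n) ℂ) (α : Fin n → ℂ) :
    ((rexp (-2 * ∑ j, ‖α j‖ ^ 2) *
        (∏ j, (4 * ‖∑ k, α k * A k j‖ ^ 2 - 1)) *
        ∏ j, (‖α j‖ ^ 2 - 1 / 2) : ℝ) : ℂ) =
      ∑ p : Fin n → Option (Fin n × Fin n), IDMTermL A p α := by
  rw [Complex.ofReal_mul, Complex.ofReal_mul, Complex.ofReal_prod, Complex.ofReal_prod]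
  have h1 : ∀ j, ((4 * ‖∑ k, α k * A k j‖ ^ 2 - 1 : ℝ) : ℂ) =
      ∑ o : Option (Fin n × Fin n), IDMtermO A α j o := by
    intro j
    rw [Complex.ofReal_sub, Complex.ofReal_mul, Complex.ofReal_one, IDM_cast_abs_sq,
      ← IDM_factor_sum A α j]
    norm_num
  have h2 : ∀ j : Fin n, ((‖α j‖ ^ 2 - 1 / 2 : ℝ) : ℂ) =
      α j * (starRingEnd ℂ) (α j) - 1 / 2 := by
    intro j
    rw [Complex.ofReal_sub, IDM_cast_abs_sq]
    norm_num
  simp_rw [h1, h2, IDM_exp_prod α]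
  rw [Fintype.prod_sum (f := fun j o => IDMtermO A α j o), Finset.mul_sum, Finset.sum_mul]
  apply Finset.sum_congr rfl
  intro p _
  rw [IDMTermL]
  simp_rw [IDM_g00]
  rw [Finset.prod_mul_distrib]
  ring

lemma IDM_integrand_R {n : ℕ} (A : Matrix (Fin n) (Fin n) ℂ) (α : Fin n → ℂ) :
    ((rexp (-2 * ∑ j, ‖α j‖ ^ 2) *
        (∏ j, ‖∑ k, α k * A k j‖ ^ 2) *
        ∏ j, (‖α j‖ ^ 2 - 1 / 2) : ℝ) : ℂ) =
      ∑ q : Fin n → Fin n × Fin n, IDMTermR A q α := by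
  rw [Complex.ofReal_mul, Complex.ofReal_mul, Complex.ofReal_prod, Complex.ofReal_prod]
  have h1 : ∀ j, ((‖∑ k, α k * A k j‖ ^ 2 : ℝ) : ℂ) =
      ∑ c : Fin n × Fin n, (α c.1 * (starRingEnd ℂ) (α c.2)) *
        (A c.1 j * (starRingEnd ℂ) (A c.2 j)) := by
    intro j
    rw [IDM_cast_abs_sq]
    have hconj : (starRingEnd ℂ) (∑ k, α k * A k j) =
        ∑ l, (starRingEnd ℂ) (α l) * (starRingEnd ℂ) (A l j) := by
      rw [map_sum]; simp [map_mul]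
    rw [hconj, Finset.sum_mul_sum, Fintype.sum_prod_type]
    apply Finset.sum_congr rfl; intro k _
    apply Finset.sum_congr rfl; intro l _
    ring
  have h2 : ∀ j : Fin n, ((‖α j‖ ^ 2 - 1 / 2 : ℝ) : ℂ) =
      α j * (starRingEnd ℂ) (α j) - 1 / 2 := by
    intro j
    rw [Complex.ofReal_sub, IDM_cast_abs_sq]
    norm_num
  simp_rw [h1, h2, IDM_exp_prod α]
  have hPS := Fintype.prod_sum (ι := Fin n) (κ := fun _ => Fin n × Fin n)
    (f := fun j c => (α c.1 * (starRingEnd ℂ) (α c.2)) * (A c.1 j * (starRingEnd ℂ) (A c.2 j)))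
  rw [hPS, Finset.mul_sum, Finset.sum_mul]
  apply Finset.sum_congr rfl
  intro q _
  rw [IDMTermR]
  simp_rw [IDM_g00]
  simp only [Finset.prod_mul_distrib]
  ring

lemma IDM_fiber_prod {n : ℕ} (S : Finset (Fin n)) (u : Fin n → Fin n) (f : Fin n → ℂ) :
    ∏ j ∈ S, f (u j) = ∏ k, f k ^ ((S.filter fun j => u j = k).card) := by
  rw [← Finset.prod_fiberwise_of_maps_to (fun j _ => Finset.mem_univ (u j)) (fun j => f (u j))]
  refine Finset.prod_congr rfl fun k _ => ?_
  rw [Finset.prod_congr rfl (fun j hj => ?_), Finset.prod_const]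
  · exact (Finset.mem_filter.mp hj).2 ▸ rfl

lemma IDM_TermL_factor {n : ℕ} (hn : 0 < n) (A : Matrix (Fin n) (Fin n) ℂ)
    (p : Fin n → Option (Fin n × Fin n)) :
    IDMTermL A p = fun α =>
      ((-1 : ℂ) ^ (n - (Finset.univ.filter fun j => (p j).isSome).card) *
        4 ^ (Finset.univ.filter fun j => (p j).isSome).card *
        ∏ j ∈ Finset.univ.filter fun j => (p j).isSome,
          (A ((p j).getD (⟨0, hn⟩, ⟨0, hn⟩)).1 j *
            (starRingEnd ℂ) (A ((p j).getD (⟨0, hn⟩, ⟨0, hn⟩)).2 j))) *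
        ∏ k, IDMg
          (((Finset.univ.filter fun j => (p j).isSome).filter
            fun j => ((p j).getD (⟨0, hn⟩, ⟨0, hn⟩)).1 = k).card)
          (((Finset.univ.filter fun j => (p j).isSome).filter
            fun j => ((p j).getD (⟨0, hn⟩, ⟨0, hn⟩)).2 = k).card)
          (α k) := by
  funext α
  set d : Fin n × Fin n := (⟨0, hn⟩, ⟨0, hn⟩) with hd
  set S : Finset (Fin n) := Finset.univ.filter fun j => (p j).isSome with hS
  set e : Fin n → Fin n × Fin n := fun j => (p j).getD d with he
  rw [IDMTermL]
  have hsplit : ∏ j, IDMtermO A α j (p j) =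
      (∏ j ∈ S, IDMtermO A α j (p j)) * ∏ j ∈ Sᶜ, IDMtermO A α j (p j) :=
    (Finset.prod_mul_prod_compl S _).symm
  have hSc : ∏ j ∈ Sᶜ, IDMtermO A α j (p j) = (-1 : ℂ) ^ (n - S.card) := by
    rw [Finset.prod_congr rfl (fun j hj => ?_), Finset.prod_const, Finset.card_compl,
      Fintype.card_fin]
    have : ¬ (p j).isSome := by
      intro h
      exact (Finset.mem_compl.mp hj) (Finset.mem_filter.mpr ⟨Finset.mem_univ _, h⟩)
    rw [Option.not_isSome_iff_eq_none.mp this]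
    rfl
  have hSmain : ∏ j ∈ S, IDMtermO A α j (p j) =
      ∏ j ∈ S, (4 * ((α (e j).1 * (starRingEnd ℂ) (α (e j).2)) *
        (A (e j).1 j * (starRingEnd ℂ) (A (e j).2 j)))) := by
    refine Finset.prod_congr rfl fun j hj => ?_
    have hsome : (p j).isSome := (Finset.mem_filter.mp hj).2
    obtain ⟨c, hc⟩ := Option.isSome_iff_exists.mp hsome
    have hec : e j = c := by rw [he]; simp [hc]
    rw [hc, hec]
    rfl
  rw [hsplit, hSc, hSmain]
  simp only [Finset.prod_mul_distrib, Finset.prod_const]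
  rw [IDM_fiber_prod S (fun j => (e j).1) α,
    IDM_fiber_prod S (fun j => (e j).2) (fun k => (starRingEnd ℂ) (α k))]
  unfold IDMg
  simp only [pow_zero, one_mul, Finset.prod_mul_distrib]
  ring


lemma IDM_TermL_integrable {n : ℕ} (hn : 0 < n) (A : Matrix (Fin n) (Fin n) ℂ)
    (p : Fin n → Option (Fin n × Fin n)) : Integrable (IDMTermL A p) := by
  rw [IDM_TermL_factor hn A p]
  exact (Integrable.fintype_prod fun k => integrable_IDMg _ _).const_mul _

lemma IDM_TermL_integral_zero {n : ℕ} (hn : 0 < n) (A : Matrix (Fin n) (Fin n) ℂ)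
    (p : Fin n → Option (Fin n × Fin n)) (j₀ : Fin n) (h : p j₀ = none) :
    ∫ α : Fin n → ℂ, IDMTermL A p α = 0 := by
  rw [IDM_TermL_factor hn A p]
  rw [MeasureTheory.integral_const_mul]
  set S : Finset (Fin n) := Finset.univ.filter fun j => (p j).isSome with hS
  set a : Fin n → ℕ := fun k =>
    (S.filter fun j => ((p j).getD (⟨0, hn⟩, ⟨0, hn⟩)).1 = k).card with ha
  change _ * ∫ x : Fin n → ℂ, ∏ k, IDMg (a k)
    ((S.filter fun j => ((p j).getD (⟨0, hn⟩, ⟨0, hn⟩)).2 = k).card) (x k) = 0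
  rw [integral_fintype_prod_volume_eq_prod (f := fun k => IDMg (a k)
    ((S.filter fun j => ((p j).getD (⟨0, hn⟩, ⟨0, hn⟩)).2 = k).card))]
  have hcard : S.card < n := by
    have hj₀ : j₀ ∉ S := by
      simp only [hS, Finset.mem_filter]
      rintro ⟨-, hs⟩
      rw [h] at hs
      simp at hs
    have : S ⊂ Finset.univ := Finset.ssubset_univ_iff.mpr (fun hu => hj₀ (hu ▸ Finset.mem_univ _))
    simpa [Fintype.card_fin] using Finset.card_lt_card this
  have hsum : ∑ k, a k = S.card :=
    (Finset.card_eq_sum_card_fiberwise (fun j _ => Finset.mem_univ _)).symm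
  have hex : ∃ k₀, a k₀ = 0 := by
    by_contra hcon
    push_neg at hcon
    have h1 : ∀ k : Fin n, 1 ≤ a k := fun k => Nat.one_le_iff_ne_zero.mpr (hcon k)
    have : (n : ℕ) ≤ ∑ k, a k := by
      calc (n : ℕ) = ∑ _k : Fin n, 1 := by simp
      _ ≤ ∑ k, a k := Finset.sum_le_sum fun k _ => h1 k
    omega
  obtain ⟨k₀, hk₀⟩ := hex
  rw [Finset.prod_eq_zero (Finset.mem_univ k₀) (by rw [hk₀]; exact integral_IDMg_zero _)]
  ring

lemma IDM_TermL_some {n : ℕ} (A : Matrix (Fin n) (Fin n) ℂ) (q : Fin n → Fin n × Fin n) :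
    IDMTermL A (fun j => some (q j)) = fun α => (4 : ℂ) ^ n * IDMTermR A q α := by
  funext α
  rw [IDMTermL, IDMTermR]
  have : ∀ j : Fin n, IDMtermO A α j (some (q j)) =
      4 * ((α (q j).1 * (starRingEnd ℂ) (α (q j).2)) *
        (A (q j).1 j * (starRingEnd ℂ) (A (q j).2 j))) := fun j => rfl
  simp only [this, Finset.prod_mul_distrib, Finset.prod_const, Finset.card_univ, Fintype.card_fin]
  ring

/-- For any `n × n` complex matrix `A`, replacing each factor `(4|·|² − 1)` by `4|·|²` in the
integral `∫_{ℂ^n} exp(−2 ∑ |α_j|²) · ∏_j (4|∑_k α_k A_{k,j}|² − 1) · ∏_j (|α_j|² − 1/2) d²α`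
does not change its value. -/
theorem integral_drop_minus_one (n : ℕ) (hn : 0 < n) (A : Matrix (Fin n) (Fin n) ℂ) :
    (∫ α : Fin n → ℂ,
        Real.exp (-2 * ∑ j, ‖α j‖ ^ 2) *
          (∏ j, (4 * ‖∑ k, α k * A k j‖ ^ 2 - 1)) *
          ∏ j, (‖α j‖ ^ 2 - 1 / 2)) =
    4 ^ n *
      ∫ α : Fin n → ℂ,
        Real.exp (-2 * ∑ j, ‖α j‖ ^ 2) *
          (∏ j, ‖∑ k, α k * A k j‖ ^ 2) *
          ∏ j, (‖α j‖ ^ 2 - 1 / 2) := by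
  have hR_int : ∀ q : Fin n → Fin n × Fin n, Integrable (IDMTermR A q) := by
    intro q
    have h1 := (IDM_TermL_integrable hn A (fun j => some (q j))).const_mul (((4 : ℂ) ^ n)⁻¹)
    have h2 : (fun α => ((4 : ℂ) ^ n)⁻¹ * IDMTermL A (fun j => some (q j)) α) = IDMTermR A q := by
      funext α
      rw [IDM_TermL_some]
      simp only []
      rw [← mul_assoc, inv_mul_cancel₀ (pow_ne_zero _ (by norm_num)), one_mul]
    rwa [h2] at h1
  rw [← Complex.ofReal_inj]
  have vanish : ∀ p ∈ (Finset.univ : Finset (Fin n → Option (Fin n × Fin n))),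
      p ∉ Finset.image (fun (q : Fin n → Fin n × Fin n) (j : Fin n) => some (q j)) Finset.univ →
      ∫ α : Fin n → ℂ, IDMTermL A p α = 0 := by
    intro p _ hp
    have hex : ∃ j₀, p j₀ = none := by
      by_contra hcon
      push_neg at hcon
      refine hp (Finset.mem_image.mpr ⟨fun j => ((p j).get
        (Option.ne_none_iff_isSome.mp (hcon j))), Finset.mem_univ _, ?_⟩)
      funext j
      simp [Option.some_get]
    obtain ⟨j₀, hj₀⟩ := hex
    exact IDM_TermL_integral_zero hn A p j₀ hj₀
  calc ((∫ α : Fin n → ℂ,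
        Real.exp (-2 * ∑ j, ‖α j‖ ^ 2) *
          (∏ j, (4 * ‖∑ k, α k * A k j‖ ^ 2 - 1)) *
          ∏ j, (‖α j‖ ^ 2 - 1 / 2) : ℝ) : ℂ)
      = ∫ α : Fin n → ℂ, ((Real.exp (-2 * ∑ j, ‖α j‖ ^ 2) *
          (∏ j, (4 * ‖∑ k, α k * A k j‖ ^ 2 - 1)) *
          ∏ j, (‖α j‖ ^ 2 - 1 / 2) : ℝ) : ℂ) := integral_ofReal.symm
    _ = ∫ α : Fin n → ℂ, ∑ p : Fin n → Option (Fin n × Fin n), IDMTermL A p α := by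
        simp_rw [IDM_integrand_L]
    _ = ∑ p : Fin n → Option (Fin n × Fin n), ∫ α : Fin n → ℂ, IDMTermL A p α :=
        integral_finset_sum _ (fun p _ => IDM_TermL_integrable hn A p)
    _ = ∑ p ∈ Finset.image (fun (q : Fin n → Fin n × Fin n) (j : Fin n) => some (q j))
          Finset.univ, ∫ α : Fin n → ℂ, IDMTermL A p α :=
        (Finset.sum_subset (Finset.subset_univ _) vanish).symm
    _ = ∑ q : Fin n → Fin n × Fin n, ∫ α : Fin n → ℂ, IDMTermL A (fun j => some (q j)) α := by
        refine Finset.sum_image fun q1 _ q2 _ h => ?_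
        funext j
        exact Option.some_injective _ (congrFun h j)
    _ = ∑ q : Fin n → Fin n × Fin n, (4 : ℂ) ^ n * ∫ α : Fin n → ℂ, IDMTermR A q α := by
        refine Finset.sum_congr rfl fun q _ => ?_
        rw [IDM_TermL_some, MeasureTheory.integral_const_mul]
    _ = (4 : ℂ) ^ n * ∑ q : Fin n → Fin n × Fin n, ∫ α : Fin n → ℂ, IDMTermR A q α :=
        (Finset.mul_sum _ _ _).symm
    _ = (4 : ℂ) ^ n * ∫ α : Fin n → ℂ, ∑ q : Fin n → Fin n × Fin n, IDMTermR A q α := by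
        rw [integral_finset_sum _ (fun q _ => hR_int q)]
    _ = (4 : ℂ) ^ n * ∫ α : Fin n → ℂ, ((Real.exp (-2 * ∑ j, ‖α j‖ ^ 2) *
          (∏ j, ‖∑ k, α k * A k j‖ ^ 2) *
          ∏ j, (‖α j‖ ^ 2 - 1 / 2) : ℝ) : ℂ) := by
        simp_rw [← IDM_integrand_R]
    _ = (4 : ℂ) ^ n * ((∫ α : Fin n → ℂ, Real.exp (-2 * ∑ j, ‖α j‖ ^ 2) *
          (∏ j, ‖∑ k, α k * A k j‖ ^ 2) *
          ∏ j, (‖α j‖ ^ 2 - 1 / 2) : ℝ) : ℂ) := by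
        congr 1
        exact integral_ofReal
    _ = ((4 ^ n * ∫ α : Fin n → ℂ, Real.exp (-2 * ∑ j, ‖α j‖ ^ 2) *
          (∏ j, ‖∑ k, α k * A k j‖ ^ 2) *
          ∏ j, (‖α j‖ ^ 2 - 1 / 2) : ℝ) : ℂ) := by push_cast; ring

end IDMaux
end

section
/- Let n be a positive integer and let A be any n × n complex matrix. Then (8/π)^n · ∫_{ℂ^n} exp(−2 ∑_{j=1}^n |α_j|²) · ∏_{j=1}^n |∑_{k=1}^n α_k A_{k,j}|² · ∏_{j=1}^n (|α_j|² − 1/2) d²α = |Per(A)|². -/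
open MeasureTheory Real

lemma integrable_exp_neg_sq_norm : Integrable (fun z : ℂ => Real.exp (-‖z‖^2)) := by
  have h := GaussianFourier.integrable_cexp_neg_mul_sq_norm_add (V := ℂ) (b := 1)
    (by norm_num) 0 0
  apply h.norm.congr
  filter_upwards with z
  rw [Complex.norm_exp]
  norm_num
  rw [← Complex.ofReal_pow, Complex.ofReal_re]

lemma pow_le_factorial_mul_exp (k : ℕ) {t : ℝ} (ht : 0 ≤ t) :
    t ^ k ≤ k.factorial * Real.exp t := by
  have h1 : t ^ k / k.factorial ≤ ∑ i ∈ Finset.range (k+1), t ^ i / i.factorial :=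
    Finset.single_le_sum (f := fun i => t ^ i / i.factorial)
      (fun i _ => by positivity) (Finset.self_mem_range_succ k)
  have h2 := Real.sum_le_exp_of_nonneg ht (k+1)
  have hk : (0:ℝ) < k.factorial := by positivity
  rw [div_le_iff₀ hk] at h1
  nlinarith [Real.exp_pos t]

lemma integrable_norm_pow_mul_exp (k : ℕ) :
    Integrable (fun z : ℂ => ‖z‖ ^ k * Real.exp (-(2 * ‖z‖ ^ 2))) := by
  refine Integrable.mono' ((integrable_exp_neg_sq_norm.const_mul
      ((k.factorial : ℝ) * Real.exp 1))) ?_ ?_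
  · exact (((continuous_norm.pow k).mul
      (((continuous_const.mul ((continuous_norm.pow 2))).neg).rexp)).aestronglyMeasurable)
  · filter_upwards with z
    have ht : (0:ℝ) ≤ ‖z‖ := norm_nonneg z
    have h1 : ‖z‖ ^ k ≤ k.factorial * Real.exp (‖z‖^2 + 1) := by
      refine (pow_le_factorial_mul_exp k ht).trans ?_
      have : Real.exp ‖z‖ ≤ Real.exp (‖z‖^2 + 1) := by
        apply Real.exp_le_exp.2; nlinarith
      nlinarith [this, (Nat.cast_pos (α := ℝ)).2 k.factorial_pos, Real.exp_pos ‖z‖]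
    rw [Real.norm_eq_abs, abs_of_nonneg (by positivity)]
    have h2 : Real.exp (-(2 * ‖z‖^2)) = Real.exp (‖z‖^2+1) * Real.exp (-‖z‖^2) /
        (Real.exp (‖z‖^2+1) * Real.exp (‖z‖^2)) := by
      rw [← Real.exp_add, ← Real.exp_add, ← Real.exp_sub]; ring_nf
    calc ‖z‖ ^ k * Real.exp (-(2 * ‖z‖ ^ 2))
        ≤ (k.factorial * Real.exp (‖z‖^2 + 1)) * Real.exp (-(2 * ‖z‖ ^ 2)) := by
          apply mul_le_mul_of_nonneg_right h1 (Real.exp_pos _).le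
      _ = k.factorial * Real.exp 1 * Real.exp (-‖z‖^2) := by
          rw [mul_assoc, ← Real.exp_add, mul_assoc, ← Real.exp_add]; ring_nf

noncomputable def wfun (z : ℂ) : ℝ := (‖z‖^2 - 1/2) * Real.exp (-(2 * ‖z‖^2))

lemma gauss_even (m : ℕ) : ∫ z : ℂ, ‖z‖^(2*m) * Real.exp (-(2*‖z‖^2))
    = π * m.factorial / 2^(m+1) := by
  have h := Complex.integral_rpow_mul_exp_neg_mul_rpow (p := 2) (q := ((2*m : ℕ) : ℝ))
    one_le_two
    (by push_cast; linarith [Nat.cast_nonneg (α := ℝ) m] : (-2:ℝ) < ((2*m:ℕ):ℝ)) (by norm_num : (0:ℝ) < 2)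
  simp_rw [Real.rpow_two, Real.rpow_natCast, neg_mul] at h
  rw [h, show (((2*m : ℕ) : ℝ) + 2)/2 = (m : ℝ) + 1 by push_cast; ring,
    Real.Gamma_nat_eq_factorial,
    show (-(((2*m : ℕ) : ℝ) + 2)/2) = -(((m+1 : ℕ) : ℝ)) by push_cast; ring,
    Real.rpow_neg (by norm_num), Real.rpow_natCast]
  field_simp


lemma moment_diag (m : ℕ) : ∫ z : ℂ, ‖z‖^(2*m) * wfun z = π * m * m.factorial / 2^(m+2) := by
  have h1 := integrable_norm_pow_mul_exp (2*(m+1))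
  have h2 := (integrable_norm_pow_mul_exp (2*m)).const_mul (1/2 : ℝ)
  have heq : ∀ z : ℂ, ‖z‖^(2*m) * wfun z =
      ‖z‖^(2*(m+1)) * Real.exp (-(2*‖z‖^2)) - (1/2) * (‖z‖^(2*m) * Real.exp (-(2*‖z‖^2))) := by
    intro z; unfold wfun; ring
  simp_rw [heq]
  rw [integral_sub h1 h2, MeasureTheory.integral_const_mul, gauss_even, gauss_even]
  rw [Nat.factorial_succ]
  push_cast
  field_simp
  ring

lemma theta_integral_zero {a b : ℕ} (hab : a ≠ b) :
    ∫ θ in Set.Ioo (-π) π, Complex.exp (((a:ℂ) - b) * θ * Complex.I) = 0 := by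
  set c : ℂ := ((a:ℂ) - b) * Complex.I with hc_def
  have hc : c ≠ 0 := by
    apply mul_ne_zero _ Complex.I_ne_zero
    rw [sub_ne_zero]
    exact_mod_cast fun h => hab (Nat.cast_inj.1 h)
  have : ∀ θ : ℝ, ((a:ℂ) - b) * θ * Complex.I = c * θ := fun θ => by rw [hc_def]; ring
  simp_rw [this]
  rw [← integral_Ioc_eq_integral_Ioo,
    ← intervalIntegral.integral_of_le (by linarith [Real.pi_pos] : -π ≤ π),
    integral_exp_mul_complex hc]
  have h2 : c * ((π : ℝ) : ℂ) = c * ((-π : ℝ) : ℂ) + ((a:ℤ) - (b:ℤ)) * (2 * π * Complex.I) := by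
    rw [hc_def]; push_cast; ring
  rw [h2, Complex.exp_add]
  have h3 := Complex.exp_int_mul_two_pi_mul_I ((a:ℤ) - (b:ℤ))
  push_cast at h3 ⊢
  rw [h3, mul_one, sub_self, zero_div]

lemma integrable_moment (a b : ℕ) :
    Integrable (fun z : ℂ => z ^ a * (starRingEnd ℂ) z ^ b * ((wfun z : ℝ) : ℂ)) := by
  have hbd := (integrable_norm_pow_mul_exp (a+b+2)).add
    ((integrable_norm_pow_mul_exp (a+b)).const_mul (1/2 : ℝ))
  refine Integrable.mono' hbd ?_ ?_
  · apply Continuous.aestronglyMeasurable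
    apply ((continuous_pow a).mul ((Complex.continuous_conj.pow b))).mul
    apply Complex.continuous_ofReal.comp
    unfold wfun
    fun_prop
  · filter_upwards with z
    have h1 : ‖z ^ a * (starRingEnd ℂ) z ^ b * ((wfun z : ℝ) : ℂ)‖
        = ‖z‖^(a+b) * (|‖z‖^2 - 1/2| * Real.exp (-(2*‖z‖^2))) := by
      rw [norm_mul, norm_mul, norm_pow, norm_pow, RCLike.norm_conj, Complex.norm_real]
      unfold wfun
      rw [Real.norm_eq_abs, abs_mul, Real.abs_exp, pow_add]
    rw [h1]
    have h2 : |‖z‖^2 - 1/2| ≤ ‖z‖^2 + 1/2 := by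
      rw [abs_sub_le_iff]; constructor <;> nlinarith [sq_nonneg ‖z‖]
    calc ‖z‖^(a+b) * (|‖z‖^2 - 1/2| * Real.exp (-(2*‖z‖^2)))
        ≤ ‖z‖^(a+b) * ((‖z‖^2 + 1/2) * Real.exp (-(2*‖z‖^2))) := by
          apply mul_le_mul_of_nonneg_left _ (by positivity)
          exact mul_le_mul_of_nonneg_right h2 (Real.exp_pos _).le
      _ = ‖z‖^(a+b+2) * Real.exp (-(2*‖z‖^2)) + 1/2 * (‖z‖^(a+b) * Real.exp (-(2*‖z‖^2))) := by
          ring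

lemma moment_eq (a b : ℕ) :
    ∫ z : ℂ, z ^ a * (starRingEnd ℂ) z ^ b * ((wfun z : ℝ) : ℂ)
    = if a = b then ((π * a * a.factorial / 2^(a+2) : ℝ) : ℂ) else 0 := by
  rcases eq_or_ne a b with rfl | hab
  · rw [if_pos rfl]
    have h : ∀ z : ℂ, z ^ a * (starRingEnd ℂ) z ^ a * ((wfun z : ℝ) : ℂ)
        = ((‖z‖^(2*a) * wfun z : ℝ) : ℂ) := by
      intro z
      rw [← mul_pow, Complex.mul_conj]
      rw [Complex.normSq_eq_norm_sq]
      push_cast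
      rw [pow_mul]
    simp_rw [h]
    have h2 := integral_ofReal (𝕜 := ℂ) (μ := volume) (f := fun z : ℂ => ‖z‖^(2*a) * wfun z)
    rw [moment_diag] at h2
    exact h2
  · rw [if_neg hab]
    rw [← Complex.integral_comp_polarCoord_symm
      (fun z : ℂ => z ^ a * (starRingEnd ℂ) z ^ b * ((wfun z : ℝ) : ℂ))]
    rw [polarCoord_target]
    have key : Set.EqOn
        (fun p : ℝ × ℝ => p.1 • ((Complex.polarCoord.symm p) ^ a *
          (starRingEnd ℂ) (Complex.polarCoord.symm p) ^ b *
          ((wfun (Complex.polarCoord.symm p) : ℝ) : ℂ)))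
        (fun p : ℝ × ℝ =>
          (((p.1 ^ (a+b+1) * wfun (p.1 : ℂ) : ℝ)) : ℂ) *
          Complex.exp (((a:ℂ) - b) * p.2 * Complex.I))
        (Set.Ioi (0:ℝ) ×ˢ Set.Ioo (-π) π) := by
      rintro ⟨r, θ⟩ ⟨hr, hθ⟩
      simp only [Set.mem_Ioi] at hr
      have hz : Complex.polarCoord.symm (r, θ) = (r : ℂ) * Complex.exp (θ * Complex.I) := by
        rw [Complex.polarCoord_symm_apply, Complex.exp_mul_I]
        push_cast
        ring
      have hnorm : ‖Complex.polarCoord.symm (r, θ)‖ = r := by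
        rw [Complex.norm_polarCoord_symm, abs_of_pos hr]
      have hw : wfun (Complex.polarCoord.symm (r, θ)) = wfun (r : ℂ) := by
        unfold wfun
        rw [hnorm, Complex.norm_real, Real.norm_eq_abs, abs_of_pos hr]
      have hconj : (starRingEnd ℂ) (Complex.polarCoord.symm (r, θ))
          = (r : ℂ) * Complex.exp (-(θ * Complex.I)) := by
        rw [hz, map_mul, Complex.conj_ofReal, ← Complex.exp_conj, map_mul,
          Complex.conj_ofReal, Complex.conj_I, mul_neg]
      simp only
      rw [hw, hconj, hz, mul_pow, mul_pow, ← Complex.exp_nat_mul, ← Complex.exp_nat_mul,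
        Complex.real_smul]
      rw [show ((a:ℂ) - b) * θ * Complex.I = (a:ℂ) * (θ * Complex.I) + (b:ℂ) * -(θ * Complex.I)
        by ring, Complex.exp_add]
      push_cast
      ring
    rw [setIntegral_congr_fun (measurableSet_Ioi.prod measurableSet_Ioo) key, MeasureTheory.Measure.volume_eq_prod,
      setIntegral_prod_mul (fun r : ℝ => ((r ^ (a+b+1) * wfun (r:ℂ) : ℝ) : ℂ))
        (fun θ : ℝ => Complex.exp (((a:ℂ) - b) * θ * Complex.I)) (Set.Ioi 0) (Set.Ioo (-π) π),
      theta_integral_zero hab, mul_zero]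


variable {n : ℕ}

def cnt (p : Fin n → Fin n) (m : Fin n) : ℕ := (Finset.univ.filter (fun j => p j = m)).card

lemma prod_comp_eq {M : Type*} [CommMonoid M] (u : Fin n → M) (p : Fin n → Fin n) :
    ∏ j, u (p j) = ∏ m, u m ^ cnt p m := by
  rw [← Finset.prod_fiberwise' Finset.univ p u]
  exact Finset.prod_congr rfl fun m _ => (Finset.prod_const _)

lemma sum_cnt (p : Fin n → Fin n) : ∑ m, cnt p m = n := by
  have := Finset.card_eq_sum_card_fiberwise (f := p) (s := Finset.univ) (t := Finset.univ)
    (fun x _ => Finset.mem_univ _)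
  simpa [cnt, Finset.card_univ] using this.symm

lemma cnt_eq_one_iff (p : Fin n → Fin n) : (∀ m, cnt p m = 1) ↔ Function.Bijective p := by
  constructor
  · intro h
    rw [Fintype.bijective_iff_injective_and_card]
    refine ⟨fun j j' hjj' => ?_, rfl⟩
    have h1 := h (p j)
    unfold cnt at h1
    rw [Finset.card_eq_one] at h1
    obtain ⟨j0, hj0⟩ := h1
    have hj : j ∈ Finset.univ.filter (fun i => p i = p j) := by simp
    have hj' : j' ∈ Finset.univ.filter (fun i => p i = p j) := by simp [hjj']
    rw [hj0, Finset.mem_singleton] at hj hj'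
    rw [hj, hj']
  · intro h m
    unfold cnt
    rw [Finset.card_eq_one]
    obtain ⟨j0, hj0⟩ := h.2 m
    refine ⟨j0, ?_⟩
    ext j
    simp only [Finset.mem_filter, Finset.mem_univ, true_and, Finset.mem_singleton]
    constructor
    · intro hj; exact h.1 (hj.trans hj0.symm)
    · rintro rfl; exact hj0

lemma exists_cnt_zero {p : Fin n → Fin n} (h : ¬ Function.Bijective p) :
    ∃ m, cnt p m = 0 := by
  have hsurj : ¬ Function.Surjective p := fun hs => h (Finite.surjective_iff_bijective.1 hs)
  simp only [Function.Surjective, not_forall, not_exists] at hsurj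
  obtain ⟨m, hm⟩ := hsurj
  refine ⟨m, ?_⟩
  unfold cnt
  rw [Finset.card_eq_zero, Finset.filter_eq_empty_iff]
  exact fun j _ => hm j

lemma sum_filter_bijective (v : Fin n → Fin n → ℂ) :
    ∑ p ∈ Finset.univ.filter (fun p : Fin n → Fin n => Function.Bijective p), ∏ j, v (p j) j
    = ∑ σ : Equiv.Perm (Fin n), ∏ j, v (σ j) j := by
  refine (Finset.sum_bij' (fun p hp => Equiv.ofBijective p (Finset.mem_filter.1 hp).2)
    (fun σ _ => ⇑σ) ?_ ?_ ?_ ?_ ?_)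
  · intro p hp; exact Finset.mem_univ _
  · intro σ _; exact Finset.mem_filter.2 ⟨Finset.mem_univ _, σ.bijective⟩
  · intro p hp; rfl
  · intro σ _; exact Equiv.ext fun j => rfl
  · intro p hp; rfl

lemma expand_integrand (n : ℕ) (A : Matrix (Fin n) (Fin n) ℂ) (α : Fin n → ℂ) :
    ((Real.exp (-2 * ∑ j, ‖α j‖ ^ 2) *
        (∏ j, ‖∑ k, α k * A k j‖ ^ 2) *
        ∏ j, (‖α j‖ ^ 2 - 1 / 2) : ℝ) : ℂ)
    = ∑ pq : (Fin n → Fin n) × (Fin n → Fin n),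
        ((∏ j, A (pq.1 j) j) * (∏ j, (starRingEnd ℂ) (A (pq.2 j) j))) *
        ∏ m, ((α m) ^ cnt pq.1 m * (starRingEnd ℂ) (α m) ^ cnt pq.2 m *
          ((wfun (α m) : ℝ) : ℂ)) := by
  have hreal : (Real.exp (-2 * ∑ j, ‖α j‖ ^ 2) *
        (∏ j, ‖∑ k, α k * A k j‖ ^ 2) *
        ∏ j, (‖α j‖ ^ 2 - 1 / 2))
      = (∏ j, ‖∑ k, α k * A k j‖ ^ 2) * ∏ j, wfun (α j) := by
    have l1 : Real.exp (-2 * ∑ j, ‖α j‖ ^ 2) *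
        (∏ j, ‖∑ k, α k * A k j‖ ^ 2) *
        ∏ j, (‖α j‖ ^ 2 - 1 / 2)
        = ∏ j, (Real.exp (-2 * ‖α j‖ ^ 2) *
            ‖∑ k, α k * A k j‖ ^ 2 * (‖α j‖ ^ 2 - 1 / 2)) := by
      rw [Finset.mul_sum, Real.exp_sum, ← Finset.prod_mul_distrib, ← Finset.prod_mul_distrib]
    rw [l1, ← Finset.prod_mul_distrib]
    refine Finset.prod_congr rfl fun j _ => ?_
    unfold wfun
    rw [neg_mul]
    ring
  rw [hreal]
  push_cast
  simp_rw [← Complex.ofReal_pow, Complex.sq_norm, ← Complex.mul_conj]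
  rw [Finset.prod_mul_distrib]
  have hconj : ∀ j, (starRingEnd ℂ) (∑ k, α k * A k j)
      = ∑ k, (starRingEnd ℂ) (α k) * (starRingEnd ℂ) (A k j) := by
    intro j; rw [map_sum]; exact Finset.sum_congr rfl fun k _ => by rw [map_mul]
  simp_rw [hconj]
  rw [Finset.prod_univ_sum, Finset.prod_univ_sum, Fintype.piFinset_univ,
    Finset.sum_mul_sum]
  rw [Finset.sum_mul]
  simp_rw [Finset.sum_mul]
  rw [Fintype.sum_prod_type]
  refine Finset.sum_congr rfl fun p _ => Finset.sum_congr rfl fun q _ => ?_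
  have hpq : ((p, q) : (Fin n → Fin n) × (Fin n → Fin n)).1 = p ∧
      ((p, q) : (Fin n → Fin n) × (Fin n → Fin n)).2 = q := ⟨rfl, rfl⟩
  rw [Finset.prod_mul_distrib, Finset.prod_mul_distrib,
    prod_comp_eq α p, prod_comp_eq (fun m => (starRingEnd ℂ) (α m)) q,
    show (∏ m, ((α m) ^ cnt p m * (starRingEnd ℂ) (α m) ^ cnt q m *
          ((wfun (α m) : ℝ) : ℂ)))
      = (∏ m, (α m) ^ cnt p m) * (∏ m, (starRingEnd ℂ) (α m) ^ cnt q m) *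
        (∏ m, ((wfun (α m) : ℝ) : ℂ)) from by
      rw [Finset.prod_mul_distrib, Finset.prod_mul_distrib]]
  ring

/-- For any `n × n` complex matrix `A`,
`(8/π)^n · ∫_{ℂ^n} exp(−2 ∑ |α_j|²) · ∏_j |∑_k α_k A_{k,j}|² · ∏_j (|α_j|² − 1/2) d²α
  = |Per(A)|²`. -/
theorem integral_eq_abs_permanent_sq (n : ℕ) (hn : 0 < n) (A : Matrix (Fin n) (Fin n) ℂ) :
    (8 / Real.pi) ^ n *
      ∫ α : Fin n → ℂ,
        Real.exp (-2 * ∑ j, ‖α j‖ ^ 2) *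
          (∏ j, ‖∑ k, α k * A k j‖ ^ 2) *
          ∏ j, (‖α j‖ ^ 2 - 1 / 2) =
    ‖A.permanent‖ ^ 2 := by
  classical
  -- complex-valued computation of the integral
  have hcint : ((∫ α : Fin n → ℂ,
      Real.exp (-2 * ∑ j, ‖α j‖ ^ 2) *
        (∏ j, ‖∑ k, α k * A k j‖ ^ 2) *
        ∏ j, (‖α j‖ ^ 2 - 1 / 2) : ℝ) : ℂ)
      = ((Real.pi / 8 : ℝ) : ℂ) ^ n * (A.permanent * (starRingEnd ℂ) A.permanent) := by
    have h0 : ((∫ α : Fin n → ℂ,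
        Real.exp (-2 * ∑ j, ‖α j‖ ^ 2) *
          (∏ j, ‖∑ k, α k * A k j‖ ^ 2) *
          ∏ j, (‖α j‖ ^ 2 - 1 / 2) : ℝ) : ℂ)
        = ∫ α : Fin n → ℂ, ((Real.exp (-2 * ∑ j, ‖α j‖ ^ 2) *
          (∏ j, ‖∑ k, α k * A k j‖ ^ 2) *
          ∏ j, (‖α j‖ ^ 2 - 1 / 2) : ℝ) : ℂ) := integral_ofReal.symm
    rw [h0]
    simp_rw [expand_integrand n A]
    have hInt : ∀ pq : (Fin n → Fin n) × (Fin n → Fin n),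
        Integrable (fun α : Fin n → ℂ =>
          ((∏ j, A (pq.1 j) j) * (∏ j, (starRingEnd ℂ) (A (pq.2 j) j))) *
          ∏ m, ((α m) ^ cnt pq.1 m * (starRingEnd ℂ) (α m) ^ cnt pq.2 m *
            ((wfun (α m) : ℝ) : ℂ))) := fun pq =>
      ((Integrable.fintype_prod (𝕜 := ℂ) (f := fun m z =>
        z ^ cnt pq.1 m * (starRingEnd ℂ) z ^ cnt pq.2 m * ((wfun z : ℝ) : ℂ))
        (fun m => integrable_moment _ _))).const_mul _
    rw [integral_finset_sum _ (fun pq _ => hInt pq)]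
    have hterm : ∀ pq : (Fin n → Fin n) × (Fin n → Fin n),
          (∫ α : Fin n → ℂ,
            ((∏ j, A (pq.1 j) j) * (∏ j, (starRingEnd ℂ) (A (pq.2 j) j))) *
            ∏ m, ((α m) ^ cnt pq.1 m * (starRingEnd ℂ) (α m) ^ cnt pq.2 m *
              ((wfun (α m) : ℝ) : ℂ)))
          = ((∏ j, A (pq.1 j) j) * (∏ j, (starRingEnd ℂ) (A (pq.2 j) j))) *
            (if Function.Bijective pq.1 ∧ Function.Bijective pq.2
              then ((Real.pi / 8 : ℝ) : ℂ) ^ n else 0) := by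
        intro pq
        rw [MeasureTheory.integral_const_mul,
          MeasureTheory.integral_fintype_prod_volume_eq_prod (ι := Fin n)
            (fun m z => z ^ cnt pq.1 m * (starRingEnd ℂ) z ^ cnt pq.2 m * ((wfun z : ℝ) : ℂ))]
        congr 1
        simp_rw [moment_eq]
        by_cases hb : Function.Bijective pq.1 ∧ Function.Bijective pq.2
        · rw [if_pos hb]
          have h1 : ∀ m, cnt pq.1 m = 1 := (cnt_eq_one_iff pq.1).2 hb.1
          have h2 : ∀ m, cnt pq.2 m = 1 := (cnt_eq_one_iff pq.2).2 hb.2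
          have : ∀ m : Fin n, (if cnt pq.1 m = cnt pq.2 m then
              ((π * (cnt pq.1 m) * (cnt pq.1 m).factorial / 2 ^ (cnt pq.1 m + 2) : ℝ) : ℂ)
              else 0) = ((Real.pi / 8 : ℝ) : ℂ) := by
            intro m
            rw [h1 m, h2 m, if_pos rfl]
            norm_num
          simp_rw [this]
          rw [Finset.prod_const, Finset.card_univ, Fintype.card_fin]
        · rw [if_neg hb]
          rcases Classical.em (Function.Bijective pq.1) with hb1 | hb1
          · have hb2 : ¬ Function.Bijective pq.2 := fun h2 => hb ⟨hb1, h2⟩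
            have h2 : ¬ ∀ m, cnt pq.2 m = 1 := fun h => hb2 ((cnt_eq_one_iff pq.2).1 h)
            push_neg at h2
            obtain ⟨m0, hm0⟩ := h2
            refine Finset.prod_eq_zero (Finset.mem_univ m0) ?_
            rw [(cnt_eq_one_iff pq.1).2 hb1 m0, if_neg (fun h => hm0 h.symm)]
          · obtain ⟨m0, hm0⟩ := exists_cnt_zero hb1
            refine Finset.prod_eq_zero (Finset.mem_univ m0) ?_
            rw [hm0]
            by_cases h0 : 0 = cnt pq.2 m0
            · rw [if_pos h0]
              norm_num
            · rw [if_neg h0]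
    simp_rw [hterm, mul_ite, mul_zero]
    rw [Finset.sum_ite, Finset.sum_const_zero, add_zero]
    rw [← Finset.univ_product_univ, Finset.filter_product, Finset.sum_product]
    have hPer : (∑ p ∈ Finset.univ.filter (fun p : Fin n → Fin n => Function.Bijective p),
        ∏ j, A (p j) j) = A.permanent := sum_filter_bijective (fun i j => A i j)
    have hPer2 : (∑ q ∈ Finset.univ.filter (fun q : Fin n → Fin n => Function.Bijective q),
        ∏ j, (starRingEnd ℂ) (A (q j) j)) = (starRingEnd ℂ) A.permanent := by
      rw [sum_filter_bijective (fun i j => (starRingEnd ℂ) (A i j))]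
      unfold Matrix.permanent
      rw [map_sum]
      exact Finset.sum_congr rfl fun σ _ => (map_prod _ _ _).symm
    simp_rw [← Finset.sum_mul]
    rw [← Finset.sum_mul_sum, hPer, hPer2]
    ring
  rw [← Complex.ofReal_inj]
  push_cast
  rw [hcint]
  have hpi : ((8 : ℂ) / (π : ℂ)) ^ n * ((Real.pi / 8 : ℝ) : ℂ) ^ n = 1 := by
    rw [← mul_pow]
    push_cast
    rw [div_mul_div_comm]
    rw [mul_comm ((π:ℂ)) 8, div_self (by
      exact mul_ne_zero (by norm_num) (Complex.ofReal_ne_zero.2 Real.pi_ne_zero)), one_pow]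
  rw [← mul_assoc, hpi, one_mul, Complex.mul_conj, Complex.normSq_eq_norm_sq]
  push_cast
  ring
end
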